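/- arXiv:1408.2340 — 8 statements merged into one kernel-verified Lean document; each statement's English description precedes it below -/
import Mathlib

section
/- If T is an essentially classical-quantum channel given by T(ρ) = Σᵢ Tr(Mᵢρ)σᵢ where (M₁,...,Mₖ) is a POVM with ‖Mᵢ‖ = 1 for all i and σᵢ are density matrices, then each POVM operator decomposes as Mᵢ = eᵢeᵢ* + M̃ᵢ where {e₁,...,eₖ} is an orthonormal family and the M̃ᵢ are positive semi-definite with Tr(M̃ᵢ eⱼeⱼ*) = 0 for all i,j. -/
open Matrix Kronecker BigOperators Filter
open scoped InnerProductSpace ComplexOrder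

noncomputable section

/-- `Mat d` is the algebra of `d × d` complex matrices. -/
abbrev Mat (d : ℕ) := Matrix (Fin d) (Fin d) ℂ

/-- A density matrix: positive semi-definite with unit trace. -/
def IsDensity {m : Type*} [Fintype m] (ρ : Matrix m m ℂ) : Prop :=
  ρ.PosSemidef ∧ ρ.trace = 1

/-- The tensor product `T₁ ⊗ T₂` of two (linear) maps on matrix algebras. -/
def tensorFun {d₁ d₂ n₁ n₂ : ℕ} (T₁ : Mat d₁ → Mat n₁) (T₂ : Mat d₂ → Mat n₂)
    (ρ : Matrix (Fin d₁ × Fin d₂) (Fin d₁ × Fin d₂) ℂ) :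
    Matrix (Fin n₁ × Fin n₂) (Fin n₁ × Fin n₂) ℂ :=
  ∑ i, ∑ j, ∑ k, ∑ l, ρ (i, k) (j, l) •
    (T₁ (Matrix.single i j 1) ⊗ₖ T₂ (Matrix.single k l 1))

/-- A quantum channel: completely positive and trace preserving. -/
def IsChannel {d n : ℕ} (T : Mat d →ₗ[ℂ] Mat n) : Prop :=
  (∀ ρ, (T ρ).trace = ρ.trace) ∧
  ∀ k : ℕ, ∀ ρ : Matrix (Fin d × Fin k) (Fin d × Fin k) ℂ,
    ρ.PosSemidef → (tensorFun (T ·) (id : Mat k → Mat k) ρ).PosSemidef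

/-- The image of the set of density matrices under a channel. -/
def chImage {d n : ℕ} (T : Mat d →ₗ[ℂ] Mat n) : Set (Mat n) :=
  (T ·) '' {ρ | IsDensity ρ}

/-- A POVM: a tuple of positive semi-definite matrices summing to the identity. -/
def IsPOVM {d k : ℕ} (M : Fin k → Mat d) : Prop :=
  (∀ i, (M i).PosSemidef) ∧ ∑ i, M i = 1

/-- The operator norm of a matrix, acting on the Euclidean (ℓ²) space. -/
def opNorm {d : ℕ} (M : Mat d) : ℝ :=
  ‖(Matrix.toEuclideanCLM (𝕜 := ℂ) (n := Fin d)) M‖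

/-- A separable bipartite state: a convex combination of tensor products of densities. -/
def SeparableState {d₁ d₂ : ℕ} (ρ : Matrix (Fin d₁ × Fin d₂) (Fin d₁ × Fin d₂) ℂ) : Prop :=
  ∃ (m : ℕ) (c : Fin m → ℝ) (A : Fin m → Mat d₁) (B : Fin m → Mat d₂),
    (∀ i, 0 ≤ c i) ∧ (∑ i, c i = 1) ∧ (∀ i, IsDensity (A i)) ∧ (∀ i, IsDensity (B i)) ∧
    ρ = ∑ i, (c i : ℂ) • (A i ⊗ₖ B i)

/-- An entanglement breaking channel: `T ⊗ id` maps states to separable states. -/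
def IsEntanglementBreaking {d n : ℕ} (T : Mat d →ₗ[ℂ] Mat n) : Prop :=
  ∀ ρ : Matrix (Fin d × Fin d) (Fin d × Fin d) ℂ, IsDensity ρ →
    SeparableState (tensorFun (T ·) (id : Mat d → Mat d) ρ)

/-- A vertex of a convex set `C`: a point of `C` such that the intersection of all
supporting hyperplanes of `C` at that point is the point itself. -/
def IsVertex {n : ℕ} (C : Set (Mat n)) (x : Mat n) : Prop :=
  x ∈ C ∧ ∀ y : Mat n,
    (∀ f : Mat n →ₗ[ℝ] ℝ, (∀ z ∈ C, f z ≤ f x) → f y = f x) → y = x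

/-- An essentially classical-quantum channel: `ρ ↦ ∑ᵢ Tr(Mᵢρ)σᵢ` for a POVM whose
elements all have operator norm one and density matrices `σᵢ`. -/
def IsEssentiallyCQ {d n : ℕ} (T : Mat d →ₗ[ℂ] Mat n) : Prop :=
  ∃ (k : ℕ) (M : Fin k → Mat d) (σ : Fin k → Mat n),
    IsPOVM M ∧ (∀ i, opNorm (M i) = 1) ∧ (∀ i, IsDensity (σ i)) ∧
    ∀ ρ, T ρ = ∑ i, (M i * ρ).trace • σ i



section Stmt0Aux

lemma aux_mul_vecMulVec {d : ℕ} (A : Mat d) (a b : Fin d → ℂ) :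
    A * vecMulVec a b = vecMulVec (A *ᵥ a) b := by
  ext i j
  simp [Matrix.mul_apply, vecMulVec_apply, Matrix.mulVec, dotProduct,
    Finset.sum_mul, mul_assoc]

lemma aux_vecMulVec_mul {d : ℕ} (A : Mat d) (a b : Fin d → ℂ) :
    vecMulVec a b * A = vecMulVec a (b ᵥ* A) := by
  ext i j
  simp [Matrix.mul_apply, vecMulVec_apply, Matrix.vecMul, dotProduct,
    Finset.mul_sum, mul_assoc]

lemma aux_vecMulVec_mulVec {d : ℕ} (a b x : Fin d → ℂ) :
    vecMulVec a b *ᵥ x = (b ⬝ᵥ x) • a := by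
  ext i
  simp [Matrix.mulVec, vecMulVec_apply, dotProduct, Finset.sum_mul, Finset.mul_sum,
    mul_comm, mul_assoc, mul_left_comm]

lemma aux_sum_dot {d k : ℕ} (s : Finset (Fin k)) (A : Fin k → Mat d) (x y : Fin d → ℂ) :
    ∑ l ∈ s, x ⬝ᵥ A l *ᵥ y = x ⬝ᵥ (∑ l ∈ s, A l) *ᵥ y := by
  classical
  induction s using Finset.induction with
  | empty => simp
  | insert _ _ h ih =>
      rw [Finset.sum_insert h, Finset.sum_insert h, ih, Matrix.add_mulVec,
        dotProduct_add]

lemma aux_vecMulVec_zero {d : ℕ} (b : Fin d → ℂ) : vecMulVec (0 : Fin d → ℂ) b = 0 := by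
  ext i j; simp [vecMulVec_apply]

lemma aux_vecMulVec_conjT {d : ℕ} (a : Fin d → ℂ) :
    (vecMulVec a (star a))ᴴ = vecMulVec a (star a) := by
  ext i j
  simp [Matrix.conjTranspose_apply, vecMulVec_apply, mul_comm]

lemma opNorm_attained {d : ℕ} (hd : 0 < d) (A : Mat d) :
    ∃ x : EuclideanSpace ℂ (Fin d), ‖x‖ = 1 ∧
      ‖(Matrix.toEuclideanCLM (𝕜 := ℂ) A) x‖ = ‖Matrix.toEuclideanCLM (𝕜 := ℂ) A‖ := by
  set T := (Matrix.toEuclideanCLM (𝕜 := ℂ) A)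
  haveI : Nonempty (Fin d) := Fin.pos_iff_nonempty.mp hd
  haveI : Nontrivial (EuclideanSpace ℂ (Fin d)) := by
    obtain ⟨i⟩ := ‹Nonempty (Fin d)›
    refine nontrivial_of_ne (EuclideanSpace.single i (1:ℂ)) 0 fun h => ?_
    have := congrArg (fun w : EuclideanSpace ℂ (Fin d) => w i) h
    simp [EuclideanSpace.single_apply] at this
  have hne : (Metric.sphere (0 : EuclideanSpace ℂ (Fin d)) 1).Nonempty :=
    NormedSpace.sphere_nonempty.mpr zero_le_one
  obtain ⟨e, heS, hmax⟩ := (isCompact_sphere (0 : EuclideanSpace ℂ (Fin d)) 1).exists_isMaxOn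
    hne (Continuous.continuousOn (by continuity : Continuous fun x => ‖T x‖))
  have he : ‖e‖ = 1 := by simpa using heS
  refine ⟨e, he, le_antisymm ?_ ?_⟩
  · simpa [he] using T.le_opNorm e
  · refine ContinuousLinearMap.opNorm_le_bound T (norm_nonneg _) fun x => ?_
    rcases eq_or_ne x 0 with rfl | hx
    · simp
    · have hxn : ‖x‖ ≠ 0 := norm_ne_zero_iff.mpr hx
      have hu : ((‖x‖⁻¹ : ℂ) • x) ∈ Metric.sphere (0 : EuclideanSpace ℂ (Fin d)) 1 := by
        simp [norm_smul, abs_of_pos (inv_pos.mpr (norm_pos_iff.mpr hx)), inv_mul_cancel₀ hxn]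
      have := hmax hu
      simp only [Set.mem_setOf_eq, _root_.map_smul, norm_smul, Complex.norm_real,
        Complex.norm_ofNat, norm_inv, norm_norm,
        abs_norm] at this
      calc ‖T x‖ = ‖x‖ * (‖x‖⁻¹ * ‖T x‖) := by field_simp
        _ ≤ ‖x‖ * ‖T e‖ := mul_le_mul_of_nonneg_left this (norm_nonneg x)
        _ = ‖T e‖ * ‖x‖ := mul_comm _ _


-- square dominated: A - A*A is PSD
open scoped MatrixOrder in
lemma sub_sq_posSemidef {d : ℕ} {A : Mat d} (hA : A.PosSemidef) (h1A : (1 - A).PosSemidef) :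
    (A - A * A).PosSemidef := by
  set S := CFC.sqrt A with hS
  have hSH : S.IsHermitian := (CFC.sqrt_nonneg A).posSemidef.1
  have hSS : S * S = A := CFC.sqrt_mul_sqrt_self A hA.nonneg
  have hcomm : A * S = S * A := by
    rw [← hSS, mul_assoc]
  have key : Sᴴ * (1 - A) * S = A - A * A := by
    rw [hSH.eq]
    calc S * (1 - A) * S = S * S - S * A * S := by
          rw [mul_sub, mul_one, sub_mul]
      _ = A - A * S * S := by rw [hSS, ← hcomm]
      _ = A - A * A := by rw [mul_assoc, hSS]
  have := h1A.conjTranspose_mul_mul_same S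
  rwa [key] at this

lemma exists_unit_eigenvec {d : ℕ} (hd : 0 < d) {A : Mat d} (hA : A.PosSemidef)
    (h1A : (1 - A).PosSemidef)
    (hn : ‖(Matrix.toEuclideanCLM (𝕜 := ℂ) A)‖ = 1) :
    ∃ v : Fin d → ℂ, star v ⬝ᵥ v = 1 ∧ A *ᵥ v = v := by
  obtain ⟨x, hx1, hTx⟩ := opNorm_attained hd A
  rw [hn] at hTx
  set v : Fin d → ℂ := (x : Fin d → ℂ) with hv
  have hvv : star v ⬝ᵥ v = 1 := by
    have : inner (𝕜 := ℂ) x x = star v ⬝ᵥ v := by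
      rw [EuclideanSpace.inner_eq_star_dotProduct, dotProduct_comm]
    rw [← this, inner_self_eq_norm_sq_to_K, hx1]; norm_num
  -- ⟪Tx, Tx⟫ = star (A*ᵥv) ⬝ᵥ (A*ᵥv) = 1
  have hww : star (A *ᵥ v) ⬝ᵥ (A *ᵥ v) = 1 := by
    have h1 : inner (𝕜 := ℂ) (Matrix.toEuclideanCLM (𝕜 := ℂ) A x) (Matrix.toEuclideanCLM (𝕜 := ℂ) A x)
        = star (A *ᵥ v) ⬝ᵥ (A *ᵥ v) := by
      rw [EuclideanSpace.inner_eq_star_dotProduct, dotProduct_comm]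
      rfl
    rw [← h1, inner_self_eq_norm_sq_to_K, hTx]; norm_num
  have hAA : star v ⬝ᵥ (A * A) *ᵥ v = 1 := by
    rw [← hww, ← Matrix.mulVec_mulVec, Matrix.dotProduct_mulVec, Matrix.star_mulVec, hA.1.eq]
  -- 1 = ⟨v, A²v⟩ ≤ ⟨v, Av⟩ ≤ 1
  have hle1 : star v ⬝ᵥ A *ᵥ v ≤ 1 := by
    have := h1A.dotProduct_mulVec_nonneg v
    have h2 : star v ⬝ᵥ (1 - A) *ᵥ v = star v ⬝ᵥ v - star v ⬝ᵥ A *ᵥ v := by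
      rw [Matrix.sub_mulVec, dotProduct_sub, Matrix.one_mulVec]
    rw [h2, hvv] at this
    exact sub_nonneg.mp this
  have hge1 : 1 ≤ star v ⬝ᵥ A *ᵥ v := by
    have := (sub_sq_posSemidef hA h1A).dotProduct_mulVec_nonneg v
    have h2 : star v ⬝ᵥ (A - A * A) *ᵥ v = star v ⬝ᵥ A *ᵥ v - star v ⬝ᵥ (A * A) *ᵥ v := by
      rw [Matrix.sub_mulVec, dotProduct_sub]
    rw [h2, hAA] at this
    exact sub_nonneg.mp this
  have heq : star v ⬝ᵥ A *ᵥ v = 1 := le_antisymm hle1 hge1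
  have hker : (1 - A) *ᵥ v = 0 := by
    apply (h1A.dotProduct_mulVec_zero_iff v).mp
    rw [Matrix.sub_mulVec, dotProduct_sub, Matrix.one_mulVec, hvv, heq, sub_self]
  refine ⟨v, hvv, ?_⟩
  have := sub_eq_zero.mp (by rw [← Matrix.sub_mulVec]; exact hker : (1 : Mat d) *ᵥ v - A *ᵥ v = 0)
  rw [Matrix.one_mulVec] at this
  exact this.symm


end Stmt0Aux

/-- POVM elements of unit operator norm decompose as `Mᵢ = eᵢeᵢ* + M̃ᵢ` with
`{eᵢ}` orthonormal, `M̃ᵢ ⪰ 0` and `Tr(M̃ᵢ eⱼeⱼ*) = 0` for all `i, j`. -/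
theorem stmt0 {d n k : ℕ} (M : Fin k → Mat d) (σ : Fin k → Mat n)
    (T : Mat d →ₗ[ℂ] Mat n)
    (hPOVM : IsPOVM M) (hnorm : ∀ i, opNorm (M i) = 1) (hσ : ∀ i, IsDensity (σ i))
    (hrep : ∀ ρ, T ρ = ∑ i, (M i * ρ).trace • σ i) :
    ∃ (e : Fin k → EuclideanSpace ℂ (Fin d)) (Mt : Fin k → Mat d),
      Orthonormal ℂ e ∧
      (∀ i, M i = vecMulVec (e i) (star (e i)) + Mt i) ∧
      (∀ i, (Mt i).PosSemidef) ∧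
      (∀ i j, (Mt i * vecMulVec (e j) (star (e j))).trace = 0) := by
  classical
  obtain ⟨hPSD, hsum⟩ := hPOVM
  rcases Nat.eq_zero_or_pos k with hk | hk
  · subst hk
    exact ⟨fun i => isEmptyElim i, fun i => isEmptyElim i,
      ⟨fun i => isEmptyElim i, fun {i} => isEmptyElim i⟩,
      fun i => isEmptyElim i, fun i => isEmptyElim i, fun i => isEmptyElim i⟩
  have hd : 0 < d := by
    by_contra hd
    have hd0 : d = 0 := Nat.eq_zero_of_not_pos hd
    subst hd0
    have h0 : M ⟨0, hk⟩ = 0 := Subsingleton.elim _ _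
    have := hnorm ⟨0, hk⟩
    rw [h0] at this
    have hz : opNorm (0 : Mat 0) = 0 := by
      unfold opNorm
      rw [map_zero, norm_zero]
    rw [hz] at this
    norm_num at this
  have h1M : ∀ i, (1 - M i).PosSemidef := by
    intro i
    have h : (1 : Mat d) - M i = ∑ j ∈ Finset.univ.erase i, M j := by
      rw [← hsum, ← Finset.add_sum_erase _ _ (Finset.mem_univ i)]
      abel
    rw [h]
    exact Finset.sum_induction _ _ (fun a b ha hb => ha.add hb) Matrix.PosSemidef.zero
      fun j _ => hPSD j
  choose v hv1 hv2 using fun i => exists_unit_eigenvec hd (hPSD i) (h1M i) (hnorm i)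
  -- other POVM elements kill the eigenvectors
  have hkill : ∀ i j, j ≠ i → M j *ᵥ v i = 0 := by
    intro i j hij
    have hsum' : ∑ l, star (v i) ⬝ᵥ M l *ᵥ v i = 1 := by
      calc ∑ l, star (v i) ⬝ᵥ M l *ᵥ v i = star (v i) ⬝ᵥ (∑ l, M l) *ᵥ v i := by
            exact aux_sum_dot Finset.univ M (star (v i)) (v i)
        _ = 1 := by rw [hsum, Matrix.one_mulVec, hv1]
    have hself : star (v i) ⬝ᵥ M i *ᵥ v i = 1 := by rw [hv2, hv1]
    have herase : ∑ l ∈ Finset.univ.erase i, star (v i) ⬝ᵥ M l *ᵥ v i = 0 := by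
      have := Finset.add_sum_erase Finset.univ (fun l => star (v i) ⬝ᵥ M l *ᵥ v i)
        (Finset.mem_univ i)
      beta_reduce at this
      rw [hsum', hself] at this
      exact add_eq_left.mp this
    have hzero : star (v i) ⬝ᵥ M j *ᵥ v i = 0 := by
      have := (Finset.sum_eq_zero_iff_of_nonneg
        (fun l _ => (hPSD l).dotProduct_mulVec_nonneg (v i))).mp herase j (Finset.mem_erase.mpr ⟨hij, Finset.mem_univ j⟩)
      exact this
    exact ((hPSD j).dotProduct_mulVec_zero_iff (v i)).mp hzero
  have hdot : ∀ i j, i ≠ j → star (v i) ⬝ᵥ v j = 0 := by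
    intro i j hij
    have h1 : star (v i) ᵥ* M j = star (M j *ᵥ v i) := by
      rw [Matrix.star_mulVec, (hPSD j).1.eq]
    calc star (v i) ⬝ᵥ v j = star (v i) ⬝ᵥ M j *ᵥ v j := by rw [hv2]
      _ = (star (v i) ᵥ* M j) ⬝ᵥ v j := (Matrix.dotProduct_mulVec _ _ _)
      _ = 0 := by rw [h1, hkill i j (Ne.symm hij)]; simp
  -- assemble
  set P : Fin k → Mat d := fun i => vecMulVec (v i) (star (v i)) with hP
  have hMP : ∀ i, M i * P i = P i := by
    intro i
    rw [hP, aux_mul_vecMulVec, hv2]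
  have hPM : ∀ i, P i * M i = P i := by
    intro i
    rw [hP, aux_vecMulVec_mul, ← (hPSD i).1.eq, ← Matrix.star_mulVec, hv2]
  have hPP : ∀ i, P i * P i = P i := by
    intro i
    rw [hP, aux_mul_vecMulVec, aux_vecMulVec_mulVec, hv1, one_smul]
  refine ⟨fun i => (WithLp.equiv 2 _).symm (v i), fun i => M i - P i, ?_, ?_, ?_, ?_⟩
  · rw [orthonormal_iff_ite]
    intro i j
    have hinner : inner (𝕜 := ℂ) ((WithLp.equiv 2 (Fin d → ℂ)).symm (v i))
        ((WithLp.equiv 2 (Fin d → ℂ)).symm (v j)) = star (v i) ⬝ᵥ v j := by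
      rw [EuclideanSpace.inner_eq_star_dotProduct, dotProduct_comm]; rfl
    rw [hinner]
    by_cases h : i = j
    · subst h; rw [hv1]; simp
    · rw [hdot i j h]; simp [h]
  · intro i
    show M i = P i + (M i - P i)
    abel
  · intro i
    have hid : (1 - P i)ᴴ * M i * (1 - P i) = M i - P i := by
      have hPH : (1 - P i)ᴴ = 1 - P i := by
        rw [Matrix.conjTranspose_sub, Matrix.conjTranspose_one, hP, aux_vecMulVec_conjT]
      rw [hPH, sub_mul, one_mul, hPM, mul_sub, mul_one, sub_mul, hMP, hPP, sub_self, sub_zero]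
    have := (hPSD i).conjTranspose_mul_mul_same (1 - P i)
    rwa [hid] at this
  · intro i j
    have hMtv : (M i - P i) *ᵥ v j = 0 := by
      rw [Matrix.sub_mulVec, hP, aux_vecMulVec_mulVec]
      by_cases h : i = j
      · subst h; rw [hv2, hv1, one_smul, sub_self]
      · rw [hkill j i h, hdot i j h, zero_smul, sub_zero]
    show ((M i - P i) * vecMulVec (v j) (star (v j))).trace = 0
    rw [aux_mul_vecMulVec, hMtv, aux_vecMulVec_zero, Matrix.trace_zero]
end
end

section
/- If T is an essentially classical-quantum channel, T(ρ) = Σᵢ₌₁ᵏ Tr(Mᵢρ)σᵢ with POVM operators Mᵢ of unit operator norm and density matrices σᵢ, then the image of the set of density matrices under T equals the convex hull of {σ₁,...,σₖ}. -/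
open Matrix Kronecker BigOperators Filter
open scoped InnerProductSpace ComplexOrder

noncomputable section

-- helpers
lemma trace_nonneg_of_psd {m : Type*} [Fintype m] [DecidableEq m] {A : Matrix m m ℂ}
    (hA : A.PosSemidef) : 0 ≤ A.trace := by
  rw [Matrix.trace]
  refine Finset.sum_nonneg fun i _ => ?_
  have := hA.dotProduct_mulVec_nonneg (Pi.single i 1)
  simpa [dotProduct, Matrix.mulVec_single, Pi.single_apply, Finset.sum_ite_eq] using this

lemma trace_mul_nonneg {m : Type*} [Fintype m] [DecidableEq m] {A B : Matrix m m ℂ}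
    (hA : A.PosSemidef) (hB : B.PosSemidef) : 0 ≤ (A * B).trace := by
  obtain ⟨C, rfl⟩ : ∃ C : Matrix m m ℂ, B = Cᴴ * C := by
    open scoped MatrixOrder in
    obtain ⟨X, hX, -, hXX⟩ :=
      CFC.exists_sqrt_of_isSelfAdjoint_of_quasispectrumRestricts hB.isHermitian
        (QuasispectrumRestricts.nnreal_of_nonneg hB.nonneg)
    exact ⟨X, by rw [← hXX, ← Matrix.star_eq_conjTranspose, hX.star_eq]⟩
  rw [← Matrix.mul_assoc, Matrix.trace_mul_cycle]
  exact trace_nonneg_of_psd (hA.mul_mul_conjTranspose_same C)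

lemma trace_mul_vecMulVec {m : Type*} [Fintype m] (M : Matrix m m ℂ) (w : m → ℂ) :
    (M * Matrix.vecMulVec w (star w)).trace = star w ⬝ᵥ (M *ᵥ w) := by
  simp only [Matrix.trace, Matrix.diag, Matrix.mul_apply, Matrix.vecMulVec_apply,
    dotProduct, Matrix.mulVec, Pi.star_apply]
  congr 1; ext j
  rw [Finset.mul_sum]
  congr 1; ext i
  ring

lemma vecMulVec_psd {m : Type*} [Fintype m] (w : m → ℂ) :
    (Matrix.vecMulVec w (star w)).PosSemidef := by
  refine Matrix.PosSemidef.of_dotProduct_mulVec_nonneg ?_ ?_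
  · ext i j
    simp [Matrix.conjTranspose_apply, Matrix.vecMulVec_apply, mul_comm]
  · intro x
    have : star x ⬝ᵥ (Matrix.vecMulVec w (star w) *ᵥ x) =
        star (star w ⬝ᵥ x) * (star w ⬝ᵥ x) := by
      simp only [dotProduct, Matrix.mulVec, Matrix.vecMulVec_apply, Pi.star_apply,
        star_sum, star_mul', star_star]
      rw [Finset.sum_mul]
      congr 1; ext i
      rw [Finset.mul_sum, Finset.mul_sum]
      congr 1; ext j
      ring
    rw [this]
    exact star_mul_self_nonneg _

lemma vecMulVec_trace {m : Type*} [Fintype m] (w : m → ℂ) :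
    (Matrix.vecMulVec w (star w)).trace = star w ⬝ᵥ w := by
  simp [Matrix.trace, Matrix.diag, Matrix.vecMulVec_apply, dotProduct, mul_comm]

lemma real_smul_mat {m : Type*} (r : ℝ) (A : Matrix m m ℂ) :
    (r : ℂ) • A = r • A := by
  ext i j
  simp [Matrix.smul_apply, Complex.real_smul]

lemma sum_mulVec' {m' n' ι : Type*} [Fintype n'] (s : Finset ι)
    (A : ι → Matrix m' n' ℂ) (v : n' → ℂ) :
    (∑ i ∈ s, A i) *ᵥ v = ∑ i ∈ s, A i *ᵥ v := by
  ext j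
  simp only [Matrix.mulVec, dotProduct, Finset.sum_apply, Matrix.sum_apply, Finset.sum_mul]
  rw [Finset.sum_comm]

lemma dotProduct_sum' {n' ι : Type*} [Fintype n'] (s : Finset ι) (u : n' → ℂ)
    (f : ι → n' → ℂ) : u ⬝ᵥ (∑ i ∈ s, f i) = ∑ i ∈ s, u ⬝ᵥ f i := by
  simp only [dotProduct, Finset.sum_apply, Finset.mul_sum]
  rw [Finset.sum_comm]


lemma exists_unit_eigvec {d : ℕ} {M : Mat d} (hM : M.PosSemidef) (h1 : opNorm M = 1) :
    ∃ w : Fin d → ℂ, star w ⬝ᵥ w = 1 ∧ M *ᵥ w = w := by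
  rcases Nat.eq_zero_or_pos d with hd | hd
  · exfalso
    subst hd
    have hM0 : M = 0 := Subsingleton.elim _ _
    rw [hM0] at h1
    rw [opNorm, map_zero, norm_zero] at h1
    exact zero_ne_one h1
  haveI : NeZero d := ⟨hd.ne'⟩
  set A := Matrix.toEuclideanCLM (𝕜 := ℂ) (n := Fin d) M with hAdef
  have hsa : _root_.IsSelfAdjoint A := by
    show star A = A
    rw [hAdef, ← map_star]
    congr 1
    exact hM.1
  obtain ⟨z, hz, hzn⟩ := spectrum.exists_nnnorm_eq_spectralRadius (a := A)
  rw [hsa.spectralRadius_eq_nnnorm] at hzn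
  have hzn' : ‖z‖ = 1 := by
    have h2 : ‖z‖₊ = ‖A‖₊ := ENNReal.coe_inj.mp hzn
    have : ‖z‖ = ‖A‖ := congrArg NNReal.toReal h2
    rw [this]; exact h1
  -- z is an eigenvalue of M
  have hzM : z ∈ spectrum ℂ M := by
    rwa [AlgEquiv.spectrum_eq (Matrix.toEuclideanCLM (𝕜 := ℂ) (n := Fin d)) M] at hz
  have hzL : z ∈ spectrum ℂ (Matrix.toLinAlgEquiv' M) := by
    rwa [AlgEquiv.spectrum_eq (Matrix.toLinAlgEquiv' (n := Fin d) (R := ℂ)) M]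
  have hev : Module.End.HasEigenvalue (Matrix.toLinAlgEquiv' M) z :=
    Module.End.hasEigenvalue_iff_mem_spectrum.mpr hzL
  obtain ⟨v, hv⟩ := hev.exists_hasEigenvector
  have hvv : M *ᵥ v = z • v := by
    have := hv.apply_eq_smul
    rwa [Matrix.toLinAlgEquiv'_apply] at this
  have hv0 : v ≠ 0 := hv.right
  set c : ℂ := star v ⬝ᵥ v with hc
  have hc0 : 0 ≤ c := dotProduct_star_self_nonneg v
  have hcne : c ≠ 0 := by
    rw [hc]
    simpa [dotProduct_star_self_eq_zero] using hv0
  obtain ⟨hcre, hcim⟩ := Complex.nonneg_iff.mp hc0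
  have hcre' : 0 < c.re := lt_of_le_of_ne hcre (by
    intro h
    exact hcne (Complex.ext h.symm hcim.symm))
  -- positivity of z
  have hq : 0 ≤ z * c := by
    have := hM.dotProduct_mulVec_nonneg v
    rwa [hvv, dotProduct_smul, smul_eq_mul, ← hc] at this
  obtain ⟨hqre, hqim⟩ := Complex.nonneg_iff.mp hq
  have him : z.im = 0 := by
    have h := hqim.symm
    rw [Complex.mul_im, ← hcim, mul_zero, zero_add] at h
    exact (mul_eq_zero.mp h).resolve_right hcre'.ne'
  have hre : 0 ≤ z.re := by
    have h : (z * c).re = z.re * c.re := by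
      simp [Complex.mul_re, ← hcim, him]
    rw [h] at hqre
    by_contra hcon
    push_neg at hcon
    nlinarith
  have habs : ‖z‖ = z.re := by
    rw [Complex.norm_def, Complex.normSq_apply, him, mul_zero, add_zero,
      Real.sqrt_mul_self hre]
  have hz1 : z = 1 := Complex.ext (by rw [← habs, hzn', Complex.one_re])
    (by rw [him, Complex.one_im])
  rw [hz1, one_smul] at hvv
  -- normalize
  have hcc : c = (c.re : ℂ) := Complex.ext rfl hcim.symm
  refine ⟨(Real.sqrt c.re : ℂ)⁻¹ • v, ?_, ?_⟩
  · have key : star ((Real.sqrt c.re : ℂ)⁻¹ • v) ⬝ᵥ ((Real.sqrt c.re : ℂ)⁻¹ • v)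
        = (Real.sqrt c.re : ℂ)⁻¹ * ((Real.sqrt c.re : ℂ)⁻¹ * c) := by
      rw [star_smul, smul_dotProduct, dotProduct_smul, smul_eq_mul, smul_eq_mul, ← hc]
      congr 2
      rw [star_inv₀]
      congr 1
      exact Complex.conj_ofReal _
    have hr : (Real.sqrt c.re)⁻¹ * ((Real.sqrt c.re)⁻¹ * c.re) = 1 := by
      rw [← mul_assoc, ← mul_inv, Real.mul_self_sqrt hcre'.le, inv_mul_cancel₀ hcre'.ne']
    rw [key, hcc]
    exact_mod_cast hr
  · rw [Matrix.mulVec_smul, hvv]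


/-- the image of an essentially classical-quantum channel is the convex hull
of the states `σ₁, …, σₖ`. -/
theorem stmt1 {d n k : ℕ} (T : Mat d →ₗ[ℂ] Mat n) (M : Fin k → Mat d) (σ : Fin k → Mat n)
    (hPOVM : IsPOVM M) (hnorm : ∀ i, opNorm (M i) = 1) (hσ : ∀ i, IsDensity (σ i))
    (hrep : ∀ ρ, T ρ = ∑ i, (M i * ρ).trace • σ i) :
    chImage T = convexHull ℝ (Set.range σ) := by
  ext x
  constructor
  · rintro ⟨ρ, hρ, rfl⟩
    simp only
    rw [hrep]
    have hnn : ∀ i, (0 : ℂ) ≤ (M i * ρ).trace := fun i => trace_mul_nonneg (hPOVM.1 i) hρ.1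
    set p : Fin k → ℝ := fun i => ((M i * ρ).trace).re with hp
    have hpe : ∀ i, (M i * ρ).trace = (p i : ℂ) := by
      intro i
      obtain ⟨h1, h2⟩ := Complex.nonneg_iff.mp (hnn i)
      exact Complex.ext rfl h2.symm
    have hsumC : ∑ i, (M i * ρ).trace = 1 := by
      rw [← Matrix.trace_sum, ← Finset.sum_mul, hPOVM.2, Matrix.one_mul, hρ.2]
    have hsum : ∑ i, p i = 1 := by
      have := congrArg Complex.re hsumC
      simpa [hp, Complex.re_sum] using this
    have hre : ∑ i, (M i * ρ).trace • σ i = ∑ i, p i • σ i := by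
      refine Finset.sum_congr rfl fun i _ => ?_
      rw [hpe i, real_smul_mat]
    rw [hre]
    exact (convex_convexHull ℝ _).sum_mem (fun i _ => Complex.nonneg_iff.mp (hnn i) |>.1)
      hsum (fun i _ => subset_convexHull ℝ _ ⟨i, rfl⟩)
  · intro hx
    rw [convexHull_range_eq_exists_affineCombination] at hx
    obtain ⟨s, w, hw0, hw1, hxeq⟩ := hx
    classical
    set cw : Fin k → ℝ := fun i => if i ∈ s then w i else 0 with hcw
    have hc0 : ∀ i, 0 ≤ cw i := by
      intro i
      by_cases h : i ∈ s <;> simp [hcw, h]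
      exact hw0 i h
    have hc1 : ∑ i, cw i = 1 := by
      rw [hcw]
      simp only [Finset.sum_ite_mem, Finset.univ_inter]
      exact hw1
    have hx' : x = ∑ i, cw i • σ i := by
      rw [← hxeq, s.affineCombination_eq_linear_combination σ w hw1]
      rw [hcw]
      simp only [ite_smul, zero_smul]
      rw [Finset.sum_ite_mem, Finset.univ_inter]
    choose wv hwv1 hwv2 using fun i => exists_unit_eigvec (hPOVM.1 i) (hnorm i)
    set ρi : Fin k → Mat d := fun i => Matrix.vecMulVec (wv i) (star (wv i)) with hρi
    have hpsd : ∀ i, (ρi i).PosSemidef := fun i => vecMulVec_psd (wv i)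
    have htr1 : ∀ i, (ρi i).trace = 1 := fun i => by
      rw [hρi]; rw [vecMulVec_trace, hwv1 i]
    have hone : ∀ i, (M i * ρi i).trace = 1 := fun i => by
      rw [hρi]; rw [trace_mul_vecMulVec, hwv2 i, hwv1 i]
    have hnn : ∀ i j, (0:ℂ) ≤ (M j * ρi i).trace := fun i j =>
      trace_mul_nonneg (hPOVM.1 j) (hpsd i)
    have hsumδ : ∀ i, ∑ l, (M l * ρi i).trace = 1 := fun i => by
      rw [← Matrix.trace_sum, ← Finset.sum_mul, hPOVM.2, Matrix.one_mul, htr1 i]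
    have hzero : ∀ i j, j ≠ i → (M j * ρi i).trace = 0 := by
      intro i j hne
      have h := hsumδ i
      rw [← Finset.add_sum_erase _ _ (Finset.mem_univ i), hone i] at h
      have h0 : ∑ l ∈ Finset.univ.erase i, (M l * ρi i).trace = 0 := by
        have := congrArg (fun t => t - 1) h
        simpa [add_sub_cancel_left] using this
      exact (Finset.sum_eq_zero_iff_of_nonneg (fun l _ => hnn i l)).mp h0 j
        (Finset.mem_erase.mpr ⟨hne, Finset.mem_univ j⟩)
    set ρ : Mat d := ∑ i, (cw i : ℂ) • ρi i with hρdef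
    have hρd : IsDensity ρ := by
      constructor
      · refine Matrix.PosSemidef.of_dotProduct_mulVec_nonneg ?_ ?_
        · show ρᴴ = ρ
          rw [hρdef, Matrix.conjTranspose_sum]
          refine Finset.sum_congr rfl fun i _ => ?_
          rw [Matrix.conjTranspose_smul, (hpsd i).1, Complex.star_def, Complex.conj_ofReal]
        · intro v
          rw [hρdef]
          rw [sum_mulVec', dotProduct_sum']
          simp only [Matrix.smul_mulVec, dotProduct_smul, smul_eq_mul]
          exact Finset.sum_nonneg fun i _ =>
            mul_nonneg (Complex.zero_le_real.mpr (hc0 i)) ((hpsd i).dotProduct_mulVec_nonneg v)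
      · rw [hρdef, Matrix.trace_sum]
        simp only [Matrix.trace_smul, htr1, smul_eq_mul, mul_one]
        rw [← Complex.ofReal_sum, hc1, Complex.ofReal_one]
    refine ⟨ρ, hρd, ?_⟩
    simp only
    rw [hrep, hx']
    have hMj : ∀ j, (M j * ρ).trace = (cw j : ℂ) := by
      intro j
      rw [hρdef, Finset.mul_sum]
      simp only [Matrix.mul_smul, Matrix.trace_sum, Matrix.trace_smul, smul_eq_mul]
      rw [Finset.sum_eq_single j]
      · rw [hone j, mul_one]
      · intro i _ hij
        rw [hzero i j (Ne.symm hij)]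
        ring
      · intro h
        exact absurd (Finset.mem_univ j) h
    refine Finset.sum_congr rfl fun j _ => ?_
    rw [hMj j, real_smul_mat]
end
end

section
/- Let T : M_d(ℂ) → M_n(ℂ) be a quantum channel and x, y distinct unit vectors in ℂᵈ such that T(xx*) is a vertex of Im(T). Let H = span{x,y} and let x⊥ be a unit vector in H orthogonal to x. Then for every density matrix ρ supported on H, T(ρ) = ⟨x, ρx⟩ T(xx*) + ⟨x⊥, ρx⊥⟩ T(x⊥x⊥*). -/
open Matrix Kronecker BigOperators Filter
open scoped InnerProductSpace ComplexOrder

noncomputable section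

namespace Stmt3Aux

variable {d n : ℕ}

lemma vmv_mulVec (u v w : Fin d → ℂ) :
    vecMulVec u v *ᵥ w = (v ⬝ᵥ w) • u := by
  ext i
  simp only [Matrix.mulVec, dotProduct, vecMulVec_apply, Pi.smul_apply, smul_eq_mul,
    Finset.sum_mul, Finset.mul_sum]
  exact Finset.sum_congr rfl fun j _ => by ring


lemma dot_outer_dot (a b u v : Fin d → ℂ) :
    star a ⬝ᵥ (vecMulVec u (star v) : Mat d) *ᵥ b = (star v ⬝ᵥ b) * (star a ⬝ᵥ u) := by
  rw [vmv_mulVec, dotProduct_smul, smul_eq_mul]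

lemma psd_outer (z : Fin d → ℂ) : (vecMulVec z (star z) : Mat d).PosSemidef := by
  refine Matrix.PosSemidef.of_dotProduct_mulVec_nonneg ?_ ?_
  · ext i j
    simp [Matrix.conjTranspose_apply, vecMulVec_apply, mul_comm]
  · intro v
    rw [vmv_mulVec, dotProduct_smul, smul_eq_mul]
    have h2 : star v ⬝ᵥ z = star (star z ⬝ᵥ v) := by
      simp only [dotProduct, star_sum, star_mul', star_star, Pi.star_apply]
      exact Finset.sum_congr rfl fun j _ => by ring
    rw [h2]
    exact mul_star_self_nonneg _

lemma trace_outer (z : EuclideanSpace ℂ (Fin d)) :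
    (vecMulVec z (star z) : Mat d).trace = ⟪z, z⟫_ℂ := by
  simp only [Matrix.trace, Matrix.diag, vecMulVec_apply, PiLp.inner_apply, RCLike.inner_apply,
    Pi.star_apply, starRingEnd_apply]

lemma outer_expand (x w : EuclideanSpace ℂ (Fin d)) (s : ℝ) :
    (vecMulVec (x + (s:ℂ) • w) (star (x + (s:ℂ) • w)) : Mat d)
      = vecMulVec x (star x) + (s:ℂ) • (vecMulVec x (star w) + vecMulVec w (star x))
        + ((s:ℂ)^2) • vecMulVec w (star w) := by
  ext i j
  have h1 : ∀ k, (x + (s:ℂ) • w) k = x k + (s:ℂ) * w k := fun k => rfl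
  have h2 : (star (x + (s:ℂ) • w) : Fin d → ℂ) j = star (x j) + (s:ℂ) * star (w j) := by
    have h0 : (star (x + (s:ℂ) • w) : Fin d → ℂ) j = star ((x + (s:ℂ) • w) j) := rfl
    rw [h0, h1, star_add, star_mul', Complex.star_def, Complex.conj_ofReal]
  simp only [vecMulVec_apply, Matrix.add_apply, Matrix.smul_apply, h1, h2, smul_eq_mul,
    Pi.star_apply, Pi.add_apply, Pi.smul_apply]
  ring


lemma small_pos (fA K : ℝ) (h : ∀ s : ℝ, s * fA ≤ s ^ 2 * K) : fA = 0 := by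
  have key : ∀ s : ℝ, 0 < s → fA ≤ s * K ∧ -fA ≤ s * K := by
    intro s hs
    constructor
    · have h1 := h s
      rw [show s ^ 2 * K = s * (s * K) by ring] at h1
      exact le_of_mul_le_mul_left h1 hs
    · have h2 := h (-s)
      rw [show (-s) ^ 2 * K = s * (s * K) by ring, show -s * fA = s * -fA by ring] at h2
      exact le_of_mul_le_mul_left h2 hs
  have habs : ∀ s : ℝ, 0 < s → |fA| ≤ s * (|K| + 1) := by
    intro s hs
    obtain ⟨h1, h2⟩ := key s hs
    have hKK : s * K ≤ s * (|K| + 1) :=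
      mul_le_mul_of_nonneg_left (by linarith [le_abs_self K]) hs.le
    rw [abs_le]
    constructor <;> linarith
  have hle : |fA| ≤ 0 := by
    by_contra h'
    push_neg at h'
    have hK1 : (0:ℝ) < |K| + 1 := by positivity
    have hs : 0 < |fA| / (2 * (|K| + 1)) := by positivity
    have hb := habs _ hs
    have heq : |fA| / (2 * (|K| + 1)) * (|K| + 1) = |fA| / 2 := by
      field_simp
    rw [heq] at hb
    linarith
  exact abs_eq_zero.mp (le_antisymm hle (abs_nonneg _))

lemma key (T : Mat d →ₗ[ℂ] Mat n) (x w : EuclideanSpace ℂ (Fin d))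
    (hx : ‖x‖ = 1) (hw : ‖w‖ = 1) (hperp : ⟪x, w⟫_ℂ = 0)
    (hvert : IsVertex (chImage T) (T (vecMulVec x (star x)))) :
    T (vecMulVec x (star w) + vecMulVec w (star x)) = 0 := by
  set v := T (vecMulVec x (star x)) with hv
  set A := T (vecMulVec x (star w) + vecMulVec w (star x)) with hA
  have main : v + A = v := by
    apply hvert.2
    intro f hf
    set B := f (T (vecMulVec w (star w))) with hB
    have hfA : ∀ s : ℝ, s * f A ≤ s ^ 2 * (f v - B) := by
      intro s
      set z : EuclideanSpace ℂ (Fin d) := x + (s:ℂ) • w with hz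
      have hpos : (0:ℝ) < 1 + s ^ 2 := by positivity
      have hperp' : ⟪w, x⟫_ℂ = 0 := by rw [← inner_conj_symm, hperp, map_zero]
      have htr : (vecMulVec z (star z) : Mat d).trace = ((1 + s ^ 2 : ℝ) : ℂ) := by
        rw [trace_outer, hz, inner_add_add_self]
        simp only [inner_smul_left, inner_smul_right]
        simp only [hperp, hperp', inner_self_eq_norm_sq_to_K, hx, hw, Complex.conj_ofReal,
          mul_zero, zero_mul, add_zero, zero_add]
        push_cast
        ring
      have hds : IsDensity ((((1 + s ^ 2 : ℝ)⁻¹ : ℝ) : ℂ) • vecMulVec z (star z) : Mat d) := by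
        refine ⟨Matrix.PosSemidef.of_dotProduct_mulVec_nonneg ?_ ?_, ?_⟩
        · show Matrix.conjTranspose _ = _
          rw [Matrix.conjTranspose_smul, (psd_outer z).1.eq]
          congr 1
          simp [Complex.star_def, Complex.conj_ofReal]
        · intro u
          rw [Matrix.smul_mulVec, dotProduct_smul, smul_eq_mul]
          exact mul_nonneg (Complex.zero_le_real.mpr (by positivity)) ((psd_outer z).dotProduct_mulVec_nonneg u)
        · rw [Matrix.trace_smul, htr, smul_eq_mul, ← Complex.ofReal_mul,
            inv_mul_cancel₀ (ne_of_gt hpos), Complex.ofReal_one]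
      have hmem : T ((((1 + s ^ 2 : ℝ)⁻¹ : ℝ) : ℂ) • vecMulVec z (star z)) ∈ chImage T :=
        ⟨_, hds, rfl⟩
      have hineq := hf _ hmem
      have hexp : T (vecMulVec z (star z))
          = T (vecMulVec x (star x)) + (s:ℂ) • A + ((s:ℂ)^2) • T (vecMulVec w (star w)) := by
        rw [hz, WithLp.ofLp_add, WithLp.ofLp_smul, outer_expand, map_add, map_add, LinearMap.map_smul, LinearMap.map_smul, hA]
      have hfval : f (T ((((1 + s ^ 2 : ℝ)⁻¹ : ℝ) : ℂ) • vecMulVec z (star z)))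
          = (1 + s ^ 2 : ℝ)⁻¹ * (f v + s * f A + s ^ 2 * B) := by
        rw [LinearMap.map_smul, Complex.coe_smul, LinearMap.map_smul, smul_eq_mul, hexp]
        have e1 : ((s:ℝ):ℂ) • A = (s:ℝ) • A := Complex.coe_smul s A
        have e2 : (((s:ℝ):ℂ))^2 • T (vecMulVec w (star w))
            = ((s^2 : ℝ)) • T (vecMulVec w (star w)) := by
          rw [← Complex.ofReal_pow]; exact Complex.coe_smul _ _
        rw [e1, e2, map_add, map_add, LinearMap.map_smul, LinearMap.map_smul, smul_eq_mul,
          smul_eq_mul, ← hv, hB]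
      rw [hfval] at hineq
      rw [inv_mul_le_iff₀ hpos] at hineq
      nlinarith [hineq]
    have : f A = 0 := small_pos (f A) (f v - B) hfA
    rw [map_add, this, add_zero]
  have := main
  rwa [add_eq_left] at this

lemma offdiag_zero (T : Mat d →ₗ[ℂ] Mat n) (x xp : EuclideanSpace ℂ (Fin d))
    (hx : ‖x‖ = 1) (hxp : ‖xp‖ = 1) (hperp : ⟪x, xp⟫_ℂ = 0)
    (hvert : IsVertex (chImage T) (T (vecMulVec x (star x)))) :
    T (vecMulVec x (star xp)) = 0 ∧ T (vecMulVec xp (star x)) = 0 := by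
  have h1 := key T x xp hx hxp hperp hvert
  have hw2 : ‖(Complex.I • xp : EuclideanSpace ℂ (Fin d))‖ = 1 := by
    rw [norm_smul, Complex.norm_I, one_mul, hxp]
  have hp2 : ⟪x, (Complex.I • xp : EuclideanSpace ℂ (Fin d))⟫_ℂ = 0 := by
    rw [inner_smul_right, hperp, mul_zero]
  have h2 := key T x (Complex.I • xp) hx hw2 hp2 hvert
  have e1 : (vecMulVec x (star (Complex.I • xp : EuclideanSpace ℂ (Fin d))) : Mat d)
      = (-Complex.I) • vecMulVec x (star xp) := by
    ext i j
    have : ∀ k, (Complex.I • xp : EuclideanSpace ℂ (Fin d)) k = Complex.I * xp k := fun k => rfl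
    simp only [vecMulVec_apply, Matrix.smul_apply, Pi.star_apply, this, star_mul',
      Complex.star_def, Complex.conj_I, smul_eq_mul]
    ring
  have e2 : (vecMulVec (Complex.I • xp : EuclideanSpace ℂ (Fin d)) (star x) : Mat d)
      = Complex.I • vecMulVec xp (star x) := by
    ext i j
    have : ∀ k, (Complex.I • xp : EuclideanSpace ℂ (Fin d)) k = Complex.I * xp k := fun k => rfl
    simp only [vecMulVec_apply, Matrix.smul_apply, this, smul_eq_mul]
    ring
  rw [e1, e2, map_add, LinearMap.map_smul, LinearMap.map_smul] at h2
  set a := T (vecMulVec x (star xp)) with ha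
  set b := T (vecMulVec xp (star x)) with hb
  rw [map_add, ← ha, ← hb] at h1
  have hba : b = -a := eq_neg_of_add_eq_zero_left (by rw [add_comm]; exact h1)
  rw [hba, smul_neg, neg_smul] at h2
  have h3 : Complex.I • a + Complex.I • a = 0 := neg_eq_zero.mp (by rw [neg_add]; exact h2)
  have h4 : (2 : ℂ) • (Complex.I • a) = 0 := by rw [two_smul]; exact h3
  have h5 : Complex.I • a = 0 := by
    rcases smul_eq_zero.mp h4 with h | h
    · exact absurd h two_ne_zero
    · exact h
  have ha0 : a = 0 := by
    rcases smul_eq_zero.mp h5 with h | h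
    · exact absurd h Complex.I_ne_zero
    · exact h
  exact ⟨ha0, by rw [hba, ha0, neg_zero]⟩

end Stmt3Aux


/-- if `T(xx*)` is a vertex of the image, then on the two-dimensional subspace
`H = span{x, y}` the channel acts as
`ρ ↦ ⟨x, ρx⟩ T(xx*) + ⟨x⊥, ρx⊥⟩ T(x⊥x⊥*)`, where `x⊥ ∈ H` is a unit vector orthogonal
to `x`.  Being supported on `H` is expressed as membership in the span of the four
elementary operators built from `x` and `x⊥`. -/
theorem stmt3 {d n : ℕ} (T : Mat d →ₗ[ℂ] Mat n) (hT : IsChannel T)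
    (x y xp : EuclideanSpace ℂ (Fin d))
    (hx : ‖x‖ = 1) (hy : ‖y‖ = 1)
    (hxy : vecMulVec x (star x) ≠ (vecMulVec y (star y) : Mat d))
    (hvert : IsVertex (chImage T) (T (vecMulVec x (star x))))
    (hxpH : xp ∈ Submodule.span ℂ ({x, y} : Set (EuclideanSpace ℂ (Fin d))))
    (hxp : ‖xp‖ = 1) (hperp : ⟪x, xp⟫_ℂ = 0)
    (ρ : Mat d) (hρ : IsDensity ρ)
    (hsupp : ρ ∈ Submodule.span ℂ
      ({vecMulVec x (star x), vecMulVec x (star xp),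
        vecMulVec xp (star x), vecMulVec xp (star xp)} : Set (Mat d))) :
    T ρ = (star x ⬝ᵥ ρ *ᵥ x) • T (vecMulVec x (star x))
        + (star xp ⬝ᵥ ρ *ᵥ xp) • T (vecMulVec xp (star xp)) := by
  obtain ⟨hoff1, hoff2⟩ := Stmt3Aux.offdiag_zero T x xp hx hxp hperp hvert
  have dip : ∀ a b : EuclideanSpace ℂ (Fin d), (star a ⬝ᵥ (b : Fin d → ℂ)) = ⟪a, b⟫_ℂ := by
    intro a b
    rw [PiLp.inner_apply]
    simp only [RCLike.inner_apply, starRingEnd_apply]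
    simp only [dotProduct, Pi.star_apply]
    exact Finset.sum_congr rfl fun j _ => mul_comm _ _
  have hperp' : ⟪xp, x⟫_ℂ = 0 := by
    rw [← inner_conj_symm, hperp, map_zero]
  have hxx : (star x ⬝ᵥ (x : Fin d → ℂ)) = 1 := by
    rw [dip, inner_self_eq_norm_sq_to_K, hx]; norm_num
  have hxpxp : (star xp ⬝ᵥ (xp : Fin d → ℂ)) = 1 := by
    rw [dip, inner_self_eq_norm_sq_to_K, hxp]; norm_num
  have hxxp : (star x ⬝ᵥ (xp : Fin d → ℂ)) = 0 := by rw [dip, hperp]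
  have hxpx : (star xp ⬝ᵥ (x : Fin d → ℂ)) = 0 := by rw [dip, hperp']
  rw [Submodule.mem_span_insert] at hsupp
  obtain ⟨a, ρ1, h1, rfl⟩ := hsupp
  rw [Submodule.mem_span_insert] at h1
  obtain ⟨b, ρ2, h2, rfl⟩ := h1
  rw [Submodule.mem_span_insert] at h2
  obtain ⟨c, ρ3, h3, rfl⟩ := h2
  rw [Submodule.mem_span_singleton] at h3
  obtain ⟨e, rfl⟩ := h3
  simp only [map_add, LinearMap.map_smul, hoff1, hoff2, smul_zero, add_zero, zero_add,
    Matrix.add_mulVec, Matrix.smul_mulVec, dotProduct_add, dotProduct_smul,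
    Stmt3Aux.dot_outer_dot, hxx, hxpxp, hxxp, hxpx, smul_eq_mul, mul_zero, zero_mul,
    mul_one, one_mul]
end
end

section
/- Let T : M_d(ℂ) → M_n(ℂ) be a quantum channel and x, y distinct unit vectors in ℂᵈ such that T(xx*) and T(yy*) are distinct vertices of Im(T). Then x and y are orthogonal. -/
open Matrix Kronecker BigOperators Filter
open scoped InnerProductSpace ComplexOrder

noncomputable section

lemma aux_psd_vmv {d : ℕ} (v : Fin d → ℂ) : (vecMulVec v (star v)).PosSemidef := by
  rw [posSemidef_iff_dotProduct_mulVec]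
  constructor
  · ext i j
    simp [conjTranspose_apply, vecMulVec_apply, mul_comm]
  · intro z
    have h1 : (vecMulVec v (star v)) *ᵥ z = (star v ⬝ᵥ z) • v := by
      ext i
      simp only [mulVec, dotProduct, vecMulVec_apply, Pi.star_apply, Pi.smul_apply,
        smul_eq_mul, Finset.sum_mul]
      exact Finset.sum_congr rfl fun _ _ => by ring
    have h2 : star z ⬝ᵥ v = star (star v ⬝ᵥ z) := by
      simp only [dotProduct, star_sum, star_mul', star_star, Pi.star_apply]
      exact Finset.sum_congr rfl fun _ _ => by ring
    rw [h1, dotProduct_smul, h2, smul_eq_mul]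
    set s := star v ⬝ᵥ z
    rw [show star s = (starRingEnd ℂ) s from rfl, Complex.mul_conj]
    exact_mod_cast Complex.normSq_nonneg s

lemma aux_psd_smul {d : ℕ} {M : Mat d} (hM : M.PosSemidef) {r : ℝ} (hr : 0 ≤ r) :
    (((r : ℂ)) • M).PosSemidef := by
  rw [posSemidef_iff_dotProduct_mulVec]
  constructor
  · have := hM.1
    unfold Matrix.IsHermitian at *
    rw [conjTranspose_smul, this]
    congr 1
    simp [Complex.conj_ofReal]
  · intro z
    rw [smul_mulVec, dotProduct_smul, smul_eq_mul]
    have := (posSemidef_iff_dotProduct_mulVec.mp hM).2 z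
    exact mul_nonneg (by exact_mod_cast hr) this

lemma aux_trace_vmv {d : ℕ} (v : Fin d → ℂ) :
    (vecMulVec v (star v)).trace = ((∑ i, Complex.normSq (v i) : ℝ) : ℂ) := by
  push_cast
  rw [Matrix.trace]
  exact Finset.sum_congr rfl fun i _ => by
    simp [Matrix.diag, vecMulVec_apply, Complex.mul_conj]

lemma aux_alpha_zero (α β δ : ℝ) (hδ : 0 < δ)
    (h : ∀ t : ℝ, |t| < δ → α * t + β * t ^ 2 ≤ 0) : α = 0 := by
  by_contra hα
  set ε := min (δ / 2) (|α| / (2 * (|β| + 1))) with hε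
  have hβ1 : 0 < |β| + 1 := by positivity
  have hαpos : 0 < |α| := abs_pos.mpr hα
  have hε0 : 0 < ε := lt_min (by linarith) (by positivity)
  have hεδ : ε < δ := lt_of_le_of_lt (min_le_left _ _) (by linarith)
  have hεα : ε ≤ |α| / (2 * (|β| + 1)) := min_le_right _ _
  -- choose t with sign of α
  have key : |α| * ε + β * ε ^ 2 ≤ 0 := by
    rcases le_or_gt 0 α with h0 | h0
    · have := h ε (by rw [abs_of_pos hε0]; exact hεδ)
      rw [abs_of_nonneg h0]; linarith
    · have := h (-ε) (by rw [abs_neg, abs_of_pos hε0]; exact hεδ)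
      rw [abs_of_neg h0]; nlinarith
  have hβε : β * ε ^ 2 ≥ -(|β| * ε ^ 2) := by nlinarith [neg_abs_le β, sq_nonneg ε]
  have h1 : |α| ≤ |β| * ε := by nlinarith
  have h2 : |β| * ε ≤ |β| * (|α| / (2 * (|β| + 1))) := by
    apply mul_le_mul_of_nonneg_left hεα (abs_nonneg β)
  have h3 : |β| * (|α| / (2 * (|β| + 1))) < |α| := by
    rw [div_eq_mul_inv]
    have : |β| * (|α| * (2 * (|β| + 1))⁻¹) = |α| * (|β| / (2 * (|β| + 1))) := by
      field_simp
    rw [this]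
    have : |β| / (2 * (|β| + 1)) < 1 := by
      rw [div_lt_one (by positivity)]; linarith
    nlinarith
  linarith

lemma aux_key {d : ℕ} (g : Mat d →ₗ[ℝ] ℝ) (x w : EuclideanSpace ℂ (Fin d)) (hx : ‖x‖ = 1)
    (h : ∀ ρ : Mat d, IsDensity ρ → g ρ ≤ g (vecMulVec x (star x))) :
    g (vecMulVec x (star w) + vecMulVec w (star x))
      = 2 * (⟪x, w⟫_ℂ).re * g (vecMulVec x (star x)) := by
  set A : Mat d := vecMulVec x (star x) with hA
  set S : Mat d := vecMulVec x (star w) + vecMulVec w (star x) with hS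
  set W : Mat d := vecMulVec w (star w) with hW
  set u : ℝ → (Fin d → ℂ) := fun t i => x i + t * w i with hu
  set r : ℝ := (⟪x, w⟫_ℂ).re with hr
  set b : ℝ := ∑ i, Complex.normSq (w i) with hb
  have hb0 : 0 ≤ b := Finset.sum_nonneg fun i _ => Complex.normSq_nonneg _
  have hρ : ∀ t : ℝ, vecMulVec (u t) (star (u t)) = A + (t : ℂ) • S + ((t : ℂ) ^ 2) • W := by
    intro t
    ext i j
    simp only [hu, hA, hS, hW, vecMulVec_apply, Matrix.add_apply, Matrix.smul_apply,
      Pi.star_apply, smul_eq_mul, star_add, star_mul', Complex.star_def, Complex.conj_ofReal]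
    ring
  have hNx : ∑ i, Complex.normSq (x i) = 1 := by
    have h1 : ‖x‖ ^ 2 = 1 := by rw [hx]; norm_num
    rw [EuclideanSpace.norm_eq] at h1
    rw [Real.sq_sqrt (Finset.sum_nonneg fun i _ => by positivity)] at h1
    rw [← h1]
    exact Finset.sum_congr rfl fun i _ => by
      rw [Complex.sq_norm]
  have hrsum : r = ∑ i, ((starRingEnd ℂ) (x i) * w i).re := by
    rw [hr]
    rw [show ⟪x, w⟫_ℂ = ∑ i, (starRingEnd ℂ) (x i) * w i from by
      simp [PiLp.inner_apply, RCLike.inner_apply, mul_comm]]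
    exact Complex.re_sum _ _
  set N : ℝ → ℝ := fun t => ∑ i, Complex.normSq (u t i) with hNdef
  have hN : ∀ t, N t = 1 + 2 * t * r + t ^ 2 * b := by
    intro t
    have : ∀ i, Complex.normSq (u t i)
        = Complex.normSq (x i) + 2 * t * ((starRingEnd ℂ) (x i) * w i).re
          + t ^ 2 * Complex.normSq (w i) := by
      intro i
      simp only [hu, Complex.normSq_apply, Complex.add_re, Complex.add_im, Complex.mul_re,
        Complex.mul_im, Complex.ofReal_re, Complex.ofReal_im, Complex.conj_re, Complex.conj_im]
      ring
    simp only [hNdef, this, Finset.sum_add_distrib, ← Finset.mul_sum, hNx, hrsum, hb]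
  set δ : ℝ := (1 + 2 * |r|)⁻¹ with hδdef
  have hδ0 : 0 < δ := by rw [hδdef]; positivity
  have hNpos : ∀ t : ℝ, |t| < δ → 0 < N t := by
    intro t ht
    have h1 : |t| * (1 + 2 * |r|) < 1 := by
      have := mul_lt_mul_of_pos_right ht (show (0:ℝ) < 1 + 2 * |r| by positivity)
      rwa [hδdef, inv_mul_cancel₀ (by positivity)] at this
    have h2 : t * r ≥ -(|t| * |r|) := by
      rw [← abs_mul]; exact neg_abs_le _
    have h3 : 0 ≤ t ^ 2 * b := mul_nonneg (sq_nonneg t) hb0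
    rw [hN t]
    nlinarith [abs_nonneg t, abs_nonneg r]
  have hdens : ∀ t : ℝ, |t| < δ →
      IsDensity ((((N t)⁻¹ : ℝ) : ℂ) • vecMulVec (u t) (star (u t))) := by
    intro t ht
    refine ⟨aux_psd_smul (aux_psd_vmv (u t)) (inv_nonneg.mpr (hNpos t ht).le), ?_⟩
    rw [Matrix.trace_smul, aux_trace_vmv, smul_eq_mul, ← Complex.ofReal_mul,
      show (∑ i, Complex.normSq (u t i)) = N t from rfl,
      inv_mul_cancel₀ (hNpos t ht).ne', Complex.ofReal_one]
  have hg : ∀ t : ℝ, g (vecMulVec (u t) (star (u t))) = g A + t * g S + t ^ 2 * g W := by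
    intro t
    rw [hρ t, map_add, map_add]
    congr 1
    · congr 1
      rw [show ((t:ℝ):ℂ) • S = (t:ℝ) • S from Complex.coe_smul t S, g.map_smul, smul_eq_mul]
    · rw [show ((t:ℝ):ℂ)^2 = (((t^2 : ℝ)):ℂ) from by push_cast; ring,
        Complex.coe_smul, g.map_smul, smul_eq_mul]
  have hineq : ∀ t : ℝ, |t| < δ →
      (g S - 2 * r * g A) * t + (g W - b * g A) * t ^ 2 ≤ 0 := by
    intro t ht
    have h1 := h _ (hdens t ht)
    rw [show (((N t)⁻¹ : ℝ) : ℂ) • vecMulVec (u t) (star (u t))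
        = ((N t)⁻¹ : ℝ) • vecMulVec (u t) (star (u t)) from Complex.coe_smul _ _,
      g.map_smul, smul_eq_mul] at h1
    have h2 := mul_le_mul_of_nonneg_left h1 (hNpos t ht).le
    rw [← mul_assoc, mul_inv_cancel₀ (hNpos t ht).ne', one_mul] at h2
    rw [hg t, hN t] at h2
    ring_nf at h2 ⊢
    linarith
  have := aux_alpha_zero (g S - 2 * r * g A) (g W - b * g A) δ hδ0 hineq
  have : g S = 2 * r * g A := by linarith
  rw [this]

/-- if `T(xx*)` and `T(yy*)` are distinct vertices of the image, then `x ⟂ y`. -/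
theorem stmt4 {d n : ℕ} (T : Mat d →ₗ[ℂ] Mat n) (hT : IsChannel T)
    (x y : EuclideanSpace ℂ (Fin d)) (hx : ‖x‖ = 1) (hy : ‖y‖ = 1)
    (hvx : IsVertex (chImage T) (T (vecMulVec x (star x))))
    (hvy : IsVertex (chImage T) (T (vecMulVec y (star y))))
    (hne : T (vecMulVec x (star x)) ≠ T (vecMulVec y (star y))) :
    ⟪x, y⟫_ℂ = 0 := by
  by_contra hc
  set c : ℂ := ⟪x, y⟫_ℂ with hcdef
  -- the perturbation directions
  set w : EuclideanSpace ℂ (Fin d) := (starRingEnd ℂ) c • y with hw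
  set w' : EuclideanSpace ℂ (Fin d) := c • x with hw'
  set S : Mat d := vecMulVec x (star w) + vecMulVec w (star x) with hS
  have hSS : S = vecMulVec y (star w') + vecMulVec w' (star y) := by
    ext i j
    simp only [hS, hw, hw', vecMulVec_apply, Matrix.add_apply, Pi.star_apply,
      PiLp.smul_apply, smul_eq_mul, star_mul', Complex.star_def, RingHomCompTriple.comp_apply,
      RingHom.id_apply, Complex.conj_conj]
    ring
  have hnc : (0:ℝ) < 2 * Complex.normSq c := by
    have := Complex.normSq_pos.mpr hc
    linarith
  set Y : Mat n := ((2 * Complex.normSq c)⁻¹ : ℝ) • T S with hY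
  have hsup : ∀ (v : EuclideanSpace ℂ (Fin d)) (f : Mat n →ₗ[ℝ] ℝ),
      (∀ z ∈ chImage T, f z ≤ f (T (vecMulVec v (star v)))) →
      ∀ ρ : Mat d, IsDensity ρ →
        (f.comp (T.restrictScalars ℝ)) ρ ≤ (f.comp (T.restrictScalars ℝ)) (vecMulVec v (star v)) := by
    intro v f hf ρ hρ
    exact hf (T ρ) ⟨ρ, hρ, rfl⟩
  have hYx : Y = T (vecMulVec x (star x)) := by
    apply hvx.2
    intro f hf
    have hk := aux_key (f.comp (T.restrictScalars ℝ)) x w hx (hsup x f hf)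
    have hinner : (⟪x, w⟫_ℂ).re = Complex.normSq c := by
      rw [hw, inner_smul_right, ← hcdef, ← Complex.normSq_eq_conj_mul_self]
      simp
    rw [hinner] at hk
    simp only [LinearMap.comp_apply, LinearMap.coe_restrictScalars] at hk
    rw [hY, f.map_smul, smul_eq_mul, ← hS] at *
    rw [hk]
    rw [← mul_assoc, inv_mul_cancel₀ hnc.ne', one_mul]
  have hYy : Y = T (vecMulVec y (star y)) := by
    apply hvy.2
    intro f hf
    have hk := aux_key (f.comp (T.restrictScalars ℝ)) y w' hy (hsup y f hf)
    have hinner : (⟪y, w'⟫_ℂ).re = Complex.normSq c := by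
      rw [hw', inner_smul_right]
      rw [show ⟪y, x⟫_ℂ = (starRingEnd ℂ) c from by rw [hcdef, ← inner_conj_symm]]
      rw [Complex.mul_conj]
      simp
    rw [hinner] at hk
    simp only [LinearMap.comp_apply, LinearMap.coe_restrictScalars] at hk
    rw [← hSS] at hk
    rw [hY, f.map_smul, smul_eq_mul, hk, ← mul_assoc, inv_mul_cancel₀ hnc.ne', one_mul]
  exact hne (hYx ▸ hYy)
end
end

section
/- Let T : M_d(ℂ) → M_n(ℂ) be a quantum channel, σ a vertex of Im(T), and x₁,...,xₖ unit vectors in ℂᵈ with T(xᵢxᵢ*) = σ for all i. Then T(xx*) = σ for every unit vector x in span{x₁,...,xₖ}. -/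
open Matrix Kronecker BigOperators Filter
open scoped InnerProductSpace ComplexOrder

noncomputable section

/-- if `σ` is a vertex of the image and `T(xᵢxᵢ*) = σ` for unit vectors
`x₁, …, xₖ`, then `T(xx*) = σ` for every unit vector `x` in their span. -/
theorem stmt5 {d n k : ℕ} (T : Mat d →ₗ[ℂ] Mat n) (hT : IsChannel T)
    (σ : Mat n) (hσ : IsVertex (chImage T) σ)
    (x : Fin k → EuclideanSpace ℂ (Fin d)) (hx : ∀ i, ‖x i‖ = 1)
    (hmap : ∀ i, T (vecMulVec (x i) (star (x i))) = σ) :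
    ∀ z : EuclideanSpace ℂ (Fin d), ‖z‖ = 1 → z ∈ Submodule.span ℂ (Set.range x) →
      T (vecMulVec z (star z)) = σ := by
  intro z hz hzspan
  refine hσ.2 _ (fun f hf => ?_)
  -- the quadratic form associated to `f ∘ T`
  set q : EuclideanSpace ℂ (Fin d) → ℝ := fun v => f (T (vecMulVec v (star v))) with hqdef
  -- outer products are positive semidefinite
  have houter : ∀ v : EuclideanSpace ℂ (Fin d), (vecMulVec v (star v)).PosSemidef := by
    intro v
    have h := Matrix.posSemidef_self_mul_conjTranspose (Matrix.replicateCol Unit (v : Fin d → ℂ))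
    rwa [Matrix.conjTranspose_replicateCol, ← Matrix.vecMulVec_eq] at h
  -- trace of outer product
  have htrace : ∀ v : EuclideanSpace ℂ (Fin d),
      (vecMulVec v (star v)).trace = ((‖v‖ ^ 2 : ℝ) : ℂ) := by
    intro v
    have h1 : ∀ i, (v : Fin d → ℂ) i * star ((v : Fin d → ℂ) i)
        = ((‖(v : Fin d → ℂ) i‖ ^ 2 : ℝ) : ℂ) := by
      intro i
      rw [Complex.star_def, Complex.mul_conj]
      norm_cast
      rw [Complex.normSq_eq_norm_sq]
    have h2 : ‖v‖ ^ 2 = ∑ i, ‖(v : Fin d → ℂ) i‖ ^ 2 := by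
      rw [EuclideanSpace.norm_eq, Real.sq_sqrt]
      exact Finset.sum_nonneg fun i _ => sq_nonneg _
    simp only [Matrix.trace, Matrix.diag, vecMulVec_apply, Pi.star_apply, h1, h2]
    push_cast
    try rfl
  -- outer products of unit vectors are densities, so their image is in chImage T
  have hmem : ∀ v : EuclideanSpace ℂ (Fin d), ‖v‖ = 1 →
      T (vecMulVec v (star v)) ∈ chImage T := by
    intro v hv
    exact ⟨vecMulVec v (star v), ⟨houter v, by rw [htrace, hv]; norm_num⟩, rfl⟩
  -- scaling of outer products
  have hsmul : ∀ (c : ℂ) (v : EuclideanSpace ℂ (Fin d)),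
      vecMulVec (c • v) (star (c • v)) = (c * star c) • vecMulVec v (star v) := by
    intro c v
    ext i j
    simp only [vecMulVec_apply, Pi.star_apply, Matrix.smul_apply, smul_eq_mul]
    show (c • v) i * star ((c • v) j) = _
    simp only [PiLp.smul_apply, smul_eq_mul, star_mul']
    ring
  have hq_csmul : ∀ (c : ℂ) (v : EuclideanSpace ℂ (Fin d)), q (c • v) = ‖c‖ ^ 2 * q v := by
    intro c v
    have hcc : c * star c = ((‖c‖ ^ 2 : ℝ) : ℂ) := by
      rw [Complex.star_def, Complex.mul_conj, Complex.normSq_eq_norm_sq]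
    simp only [hqdef]
    rw [hsmul, hcc, Complex.coe_smul, LinearMap.map_smul_of_tower, LinearMap.map_smul, smul_eq_mul]
  -- the key inequality q v ≤ f σ * ‖v‖²
  have hq_le : ∀ v : EuclideanSpace ℂ (Fin d), q v ≤ f σ * ‖v‖ ^ 2 := by
    intro v
    by_cases hv : v = 0
    · subst hv
      have h0 : q (0 : EuclideanSpace ℂ (Fin d)) = 0 := by
        have h := hq_csmul 0 0
        simpa using h
      rw [h0]
      simp
    · have hnv : ‖v‖ ≠ 0 := norm_ne_zero_iff.mpr hv
      obtain ⟨u, hun, hvu⟩ : ∃ u : EuclideanSpace ℂ (Fin d),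
          ‖u‖ = 1 ∧ v = ((‖v‖ : ℝ) : ℂ) • u := by
        refine ⟨((‖v‖ : ℂ))⁻¹ • v, ?_, ?_⟩
        · rw [norm_smul, norm_inv, Complex.norm_real, Real.norm_eq_abs,
            abs_of_nonneg (norm_nonneg v), inv_mul_cancel₀ hnv]
        · rw [smul_smul, mul_inv_cancel₀ (by exact_mod_cast hnv), one_smul]
      have hq_u : q u ≤ f σ := hf _ (hmem u hun)
      rw [hvu, hq_csmul, norm_smul, mul_pow, Complex.norm_real, Real.norm_eq_abs,
        abs_of_nonneg (norm_nonneg v), hun]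
      nlinarith [sq_nonneg ‖v‖]
  -- the polarization
  set B : EuclideanSpace ℂ (Fin d) → EuclideanSpace ℂ (Fin d) → ℝ :=
    fun u w => f (T (vecMulVec u (star w))) with hBdef
  have houter_add : ∀ u w : EuclideanSpace ℂ (Fin d),
      vecMulVec ((u + w : EuclideanSpace ℂ (Fin d)) : Fin d → ℂ)
        (star ((u + w : EuclideanSpace ℂ (Fin d)) : Fin d → ℂ))
      = vecMulVec u (star u) + vecMulVec u (star w)
        + vecMulVec w (star u) + vecMulVec w (star w) := by
    intro u w
    ext i j
    simp only [vecMulVec_apply, Pi.star_apply, Matrix.add_apply]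
    show (u + w) i * star ((u + w) j) = _
    simp only [PiLp.add_apply, star_add]
    ring
  have hexp : ∀ u w : EuclideanSpace ℂ (Fin d), q (u + w) = q u + q w + (B u w + B w u) := by
    intro u w
    simp only [hqdef, hBdef, houter_add, map_add]
    ring
  have hB_lsmul : ∀ (t : ℝ) (u w : EuclideanSpace ℂ (Fin d)),
      B ((t : ℂ) • u) w = t * B u w := by
    intro t u w
    have h : vecMulVec (((t : ℂ) • u : EuclideanSpace ℂ (Fin d)) : Fin d → ℂ) (star w)
        = (t : ℂ) • vecMulVec u (star w) := by
      ext i j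
      simp only [vecMulVec_apply, Matrix.smul_apply, smul_eq_mul]
      show ((t : ℂ) • u) i * _ = _
      simp only [PiLp.smul_apply, smul_eq_mul]
      ring
    simp only [hBdef]
    rw [h, Complex.coe_smul, LinearMap.map_smul_of_tower, LinearMap.map_smul, smul_eq_mul]
  have hB_rsmul : ∀ (t : ℝ) (u w : EuclideanSpace ℂ (Fin d)),
      B u ((t : ℂ) • w) = t * B u w := by
    intro t u w
    have h : vecMulVec (u : Fin d → ℂ) (star (((t : ℂ) • w : EuclideanSpace ℂ (Fin d)) : Fin d → ℂ))
        = (t : ℂ) • vecMulVec u (star w) := by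
      ext i j
      simp only [vecMulVec_apply, Matrix.smul_apply, smul_eq_mul, Pi.star_apply]
      show _ * star (((t : ℂ) • w) j) = _
      simp only [PiLp.smul_apply, smul_eq_mul, star_mul', Complex.star_def, Complex.conj_ofReal]
      ring
    simp only [hBdef]
    rw [h, Complex.coe_smul, LinearMap.map_smul_of_tower, LinearMap.map_smul, smul_eq_mul]
  -- the zero set is closed under addition (Cauchy-Schwarz for the PSD form fσ‖·‖² - q)
  have hadd : ∀ u w : EuclideanSpace ℂ (Fin d), q u = f σ * ‖u‖ ^ 2 → q w = f σ * ‖w‖ ^ 2 →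
      q (u + w) = f σ * ‖u + w‖ ^ 2 := by
    intro u w hu hw
    have hkey : ∀ t : ℝ, q (u + (t : ℂ) • w)
        = q u + t ^ 2 * q w + t * (B u w + B w u) := by
      intro t
      rw [hexp, hq_csmul, hB_rsmul, hB_lsmul, Complex.norm_real, Real.norm_eq_abs, sq_abs]
      ring
    have hnorm : ∀ t : ℝ, ‖u + (t : ℂ) • w‖ ^ 2
        = ‖u‖ ^ 2 + t ^ 2 * ‖w‖ ^ 2 + 2 * t * Complex.re (inner ℂ u w : ℂ) := by
      intro t
      rw [norm_add_sq (𝕜 := ℂ), inner_smul_right, norm_smul, Complex.norm_real,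
        Real.norm_eq_abs]
      rw [mul_pow, sq_abs]
      have hre : RCLike.re ((t : ℂ) * (inner ℂ u w : ℂ)) = t * Complex.re (inner ℂ u w : ℂ) := by
        simp [RCLike.re_ofReal_mul]
      rw [hre]
      ring
    set R : ℝ := 2 * f σ * Complex.re (inner ℂ u w : ℂ) - (B u w + B w u) with hR
    have ht : ∀ t : ℝ, 0 ≤ t * R := by
      intro t
      have h := hq_le (u + (t : ℂ) • w)
      rw [hkey, hnorm, hu, hw] at h
      rw [hR]
      nlinarith [h]
    have hR0 : R = 0 := by
      have h1 := ht 1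
      have h2 := ht (-1)
      nlinarith
    have h1 : q (u + w) = q u + q w + (B u w + B w u) := hexp u w
    have hn1 : ‖u + w‖ ^ 2 = ‖u‖ ^ 2 + ‖w‖ ^ 2 + 2 * Complex.re (inner ℂ u w : ℂ) := by
      have := hnorm 1
      simpa using this
    rw [h1, hn1, hu, hw]
    have : B u w + B w u = 2 * f σ * Complex.re (inner ℂ u w : ℂ) := by
      have := hR0
      rw [hR] at this
      linarith
    rw [this]
    ring
  -- the zero set as a ℂ-submodule
  let W : Submodule ℂ (EuclideanSpace ℂ (Fin d)) :=
    { carrier := {v | q v = f σ * ‖v‖ ^ 2}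
      zero_mem' := by
        show q (0 : EuclideanSpace ℂ (Fin d)) = f σ * ‖(0 : EuclideanSpace ℂ (Fin d))‖ ^ 2
        have h0 : q (0 : EuclideanSpace ℂ (Fin d)) = 0 := by
          have h := hq_csmul 0 0
          simpa using h
        rw [h0]
        simp
      add_mem' := fun {u w} hu hw => hadd u w hu hw
      smul_mem' := fun c v hv => by
        show q (c • v) = f σ * ‖c • v‖ ^ 2
        rw [hq_csmul, hv, norm_smul, mul_pow]
        ring }
  have hxW : ∀ i, x i ∈ W := by
    intro i
    show f (T (vecMulVec (x i) (star (x i)))) = f σ * ‖x i‖ ^ 2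
    rw [hmap i, hx i]
    norm_num
  have hzW : z ∈ W := by
    have hle : Submodule.span ℂ (Set.range x) ≤ W :=
      Submodule.span_le.mpr (Set.range_subset_iff.mpr hxW)
    exact hle hzspan
  have : q z = f σ * ‖z‖ ^ 2 := hzW
  rw [hz] at this
  simpa [hqdef] using this
end
end

section
/- If T : M_d(ℂ) → M_n(ℂ) is a quantum channel whose image is a convex polytope with k vertices, then the affine dimension of Im(T) is at most k−1, and k ≤ d, hence dim(Im(T)) ≤ d−1. -/
open Matrix Kronecker BigOperators Filter
open scoped InnerProductSpace ComplexOrder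

noncomputable section

/-! ### Auxiliary machinery -/

section Aux

open Set

lemma sq_ineq_zero {A B : ℝ} (h : ∀ t : ℝ, t * A ≤ t ^ 2 * B) : A = 0 := by
  by_contra hA
  set b : ℝ := |B| + 1 with hbdef
  have hb : (0:ℝ) < b := by positivity
  have hBb : B ≤ b := by rw [hbdef]; linarith [le_abs_self B]
  have ht := h (A / (2 * b))
  have h2 : (0:ℝ) < A ^ 2 := by positivity
  have hta : A / (2 * b) * A = A ^ 2 / (2 * b) := by ring
  have htsq : (A / (2 * b)) ^ 2 = A ^ 2 / (4 * b ^ 2) := by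
    field_simp; ring
  rw [hta, htsq] at ht
  have h3 : A ^ 2 / (4 * b ^ 2) * B ≤ A ^ 2 / (4 * b ^ 2) * b :=
    mul_le_mul_of_nonneg_left hBb (by positivity)
  have h4 : A ^ 2 / (2 * b) ≤ A ^ 2 / (4 * b ^ 2) * b := le_trans ht h3
  have h5 : A ^ 2 / (4 * b ^ 2) * b = A ^ 2 / (4 * b) := by field_simp
  rw [h5] at h4
  rw [div_le_div_iff₀ (by positivity) (by positivity)] at h4
  nlinarith

lemma extreme_combo {V : Type*} [AddCommGroup V] [Module ℝ V] {C : Set V} (hC : Convex ℝ C)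
    {x : V} (hx : x ∈ Set.extremePoints ℝ C) {ι : Type*} [DecidableEq ι]
    (s : Finset ι) (w : ι → ℝ) (p : ι → V)
    (h0 : ∀ j ∈ s, 0 ≤ w j) (h1 : ∑ j ∈ s, w j = 1) (hp : ∀ j ∈ s, p j ∈ C)
    (hxc : ∑ j ∈ s, w j • p j = x) : ∀ j ∈ s, w j ≠ 0 → p j = x := by
  intro j hj hwj
  have hwjpos : 0 < w j := lt_of_le_of_ne (h0 j hj) (Ne.symm hwj)
  have hsplit : w j + ∑ l ∈ s.erase j, w l = 1 := by
    rw [Finset.add_sum_erase s w hj]; exact h1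
  have hu0 : 0 ≤ ∑ l ∈ s.erase j, w l :=
    Finset.sum_nonneg fun l hl => h0 l (Finset.mem_of_mem_erase hl)
  set u := ∑ l ∈ s.erase j, w l with hu
  have hxsplit : x = w j • p j + ∑ l ∈ s.erase j, w l • p l := by
    rw [← hxc]
    exact (Finset.add_sum_erase s (fun l => w l • p l) hj).symm
  rcases eq_or_lt_of_le hu0 with h0u | h0u
  · have hall : ∀ l ∈ s.erase j, w l = 0 := by
      intro l hl
      exact (Finset.sum_eq_zero_iff_of_nonneg
        (fun l hl => h0 l (Finset.mem_of_mem_erase hl))).mp h0u.symm l hl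
    have hwj1 : w j = 1 := by rw [← h0u] at hsplit; linarith
    have : x = w j • p j := by
      rw [hxsplit, Finset.sum_eq_zero, add_zero]
      intro l hl; rw [hall l hl, zero_smul]
    rw [this, hwj1, one_smul]
  · have huj : w j < 1 := by linarith
    set y := ∑ l ∈ s.erase j, (w l / u) • p l with hy
    have hyC : y ∈ C := by
      apply hC.sum_mem
      · intro l hl; exact div_nonneg (h0 l (Finset.mem_of_mem_erase hl)) hu0
      · rw [← Finset.sum_div, ← hu, div_self (ne_of_gt h0u)]
      · intro l hl; exact hp l (Finset.mem_of_mem_erase hl)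
    have huy : u • y = ∑ l ∈ s.erase j, w l • p l := by
      rw [hy, Finset.smul_sum]
      apply Finset.sum_congr rfl
      intro l hl
      rw [smul_smul, mul_div_cancel₀ _ (ne_of_gt h0u)]
    have hseg : x ∈ openSegment ℝ (p j) y :=
      ⟨w j, u, hwjpos, h0u, hsplit, by rw [huy, hxsplit]⟩
    exact ((mem_extremePoints.mp hx).2 _ (hp j hj) _ hyC hseg).1

lemma exists_strict_sep {V : Type*} [AddCommGroup V] [Module ℝ V] [FiniteDimensional ℝ V]
    (s : Finset V) (x : V) (hx : x ∉ convexHull ℝ (s : Set V)) :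
    ∃ f : V →ₗ[ℝ] ℝ, ∀ y ∈ s, f y < f x := by
  set e := (Module.finBasis ℝ V).equivFun with he
  have himg : convexHull ℝ (e '' (s : Set V)) = e '' (convexHull ℝ (s : Set V)) :=
    (e.toLinearMap.image_convexHull (s : Set V)).symm
  have hx' : e x ∉ convexHull ℝ (e '' (s : Set V)) := by
    rw [himg]
    rintro ⟨z, hz, hze⟩
    exact hx (by rwa [← e.injective hze])
  have hclosed : IsClosed (convexHull ℝ (e '' (s : Set V))) :=
    (((s : Set V).toFinite.image e).isCompact_convexHull ℝ).isClosed
  obtain ⟨g, u, hgu, hux⟩ :=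
    geometric_hahn_banach_closed_point (convex_convexHull ℝ _) hclosed hx'
  refine ⟨g.toLinearMap.comp e.toLinearMap, fun y hy => ?_⟩
  have : g (e y) < u := hgu _ (subset_convexHull ℝ _ ⟨y, hy, rfl⟩)
  simpa using lt_trans this hux

lemma vertex_pointed {V : Type*} [AddCommGroup V] [Module ℝ V] [FiniteDimensional ℝ V]
    {k : ℕ} {σ : Fin k → V} (hinj : Function.Injective σ)
    {C : Set V} (hhull : C = convexHull ℝ (Set.range σ)) (i : Fin k)
    (hexti : σ i ∈ Set.extremePoints ℝ C)
    {v : V} (hv : ∀ h : V →ₗ[ℝ] ℝ, (∀ y ∈ C, h y ≤ h (σ i)) → h v = 0) : v = 0 := by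
  classical
  have hCconv : Convex ℝ C := hhull ▸ convex_convexHull ℝ _
  have key : ∀ h : V →ₗ[ℝ] ℝ, (∀ m, m ≠ i → h (σ m) ≤ h (σ i)) → h v = 0 := by
    intro h hm
    apply hv h
    rw [hhull]
    intro y hy
    have hhalf : Convex ℝ {z : V | h z ≤ h (σ i)} :=
      convex_halfSpace_le (𝕜 := ℝ) (f := fun z : V => h z) ⟨map_add h, map_smul h⟩ (h (σ i))
    have hsub : convexHull ℝ (Set.range σ) ⊆ {z : V | h z ≤ h (σ i)} := by
      apply convexHull_min _ hhalf
      rintro _ ⟨m, rfl⟩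
      show h (σ m) ≤ h (σ i)
      by_cases hmi : m = i
      · subst hmi; exact le_rfl
      · exact hm m hmi
    exact hsub hy
  have hnot : σ i ∉ convexHull ℝ ((Finset.image σ (Finset.univ.erase i)) : Set V) := by
    intro hmem
    rw [Finset.mem_convexHull] at hmem
    obtain ⟨w, hw0, hw1, hwc⟩ := hmem
    have hcm : ∑ y ∈ Finset.image σ (Finset.univ.erase i), w y • y = σ i := by
      rw [← hwc, Finset.centerMass, hw1]
      simp
    have hmemC : ∀ y ∈ Finset.image σ (Finset.univ.erase i), y ∈ C := by
      intro y hy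
      obtain ⟨m, _, rfl⟩ := Finset.mem_image.mp hy
      rw [hhull]; exact subset_convexHull ℝ _ ⟨m, rfl⟩
    have hall := extreme_combo hCconv hexti _ w id hw0 hw1 hmemC (by simpa using hcm)
    obtain ⟨y, hy, hyne⟩ := Finset.exists_ne_zero_of_sum_ne_zero
      (s := Finset.image σ (Finset.univ.erase i)) (f := w) (by rw [hw1]; exact one_ne_zero)
    obtain ⟨m, hm, rfl⟩ := Finset.mem_image.mp hy
    have : σ m = σ i := hall _ hy hyne
    exact (Finset.mem_erase.mp hm).1 (hinj this)
  obtain ⟨f₀, hf₀⟩ := exists_strict_sep _ _ hnot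
  have hf₀lt : ∀ m, m ≠ i → f₀ (σ m) < f₀ (σ i) := fun m hmi =>
    hf₀ _ (Finset.mem_image_of_mem σ (Finset.mem_erase.mpr ⟨hmi, Finset.mem_univ m⟩))
  have hf0v : f₀ v = 0 := key f₀ fun m hmi => (hf₀lt m hmi).le
  rw [← Module.forall_dual_apply_eq_zero_iff ℝ v]
  intro g
  by_cases hk : (Finset.univ.erase i).Nonempty
  · set F := fun m => (f₀ (σ i) - f₀ (σ m)) / (|g (σ i) - g (σ m)| + 1) with hF
    set ε := ((Finset.univ.erase i).image F).min' (hk.image _) with hε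
    have hεpos : 0 < ε := by
      rw [hε]
      rw [Finset.lt_min'_iff]
      intro y hy
      obtain ⟨m, hm, hme⟩ := Finset.mem_image.mp hy
      rw [← hme, hF]
      have := hf₀lt m (Finset.mem_erase.mp hm).1
      exact div_pos (by linarith) (by positivity)
    have hεle : ∀ m ∈ Finset.univ.erase i, ε ≤ F m := fun m hm =>
      Finset.min'_le _ _ (Finset.mem_image_of_mem _ hm)
    have hmax : ∀ m, m ≠ i → (f₀ + ε • g) (σ m) ≤ (f₀ + ε • g) (σ i) := by
      intro m hmi
      have h1 := hεle m (Finset.mem_erase.mpr ⟨hmi, Finset.mem_univ m⟩)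
      have h2 : (0:ℝ) < |g (σ i) - g (σ m)| + 1 := by positivity
      rw [hF] at h1
      have h3 : ε * (|g (σ i) - g (σ m)| + 1) ≤ f₀ (σ i) - f₀ (σ m) := (le_div_iff₀ h2).mp h1
      have h4 : ε * (g (σ m) - g (σ i)) ≤ ε * |g (σ i) - g (σ m)| := by
        apply mul_le_mul_of_nonneg_left _ hεpos.le
        calc g (σ m) - g (σ i) ≤ |g (σ m) - g (σ i)| := le_abs_self _
          _ = |g (σ i) - g (σ m)| := abs_sub_comm _ _
      simp only [LinearMap.add_apply, LinearMap.smul_apply, smul_eq_mul]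
      nlinarith
    have hzero := key _ hmax
    simp only [LinearMap.add_apply, LinearMap.smul_apply, smul_eq_mul, hf0v] at hzero
    have : ε * g v = 0 := by linarith
    exact (mul_eq_zero.mp this).resolve_left (ne_of_gt hεpos)
  · apply key g
    intro m hmi
    exact absurd (⟨m, Finset.mem_erase.mpr ⟨hmi, Finset.mem_univ m⟩⟩ :
      (Finset.univ.erase i).Nonempty) hk

/-- The rank-one (outer product) matrix `v v†`. -/
def outer {d : ℕ} (v : Fin d → ℂ) : Mat d :=
  Matrix.of fun a b => v a * (starRingEnd ℂ) (v b)

lemma outer_posSemidef {d : ℕ} (v : Fin d → ℂ) : (outer v).PosSemidef := by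
  rw [Matrix.posSemidef_iff_dotProduct_mulVec]
  constructor
  · ext a b
    simp [outer, Matrix.conjTranspose_apply, mul_comm]
  · intro x
    have : star x ⬝ᵥ (outer v *ᵥ x) =
        star (∑ b, (starRingEnd ℂ) (v b) * x b) * (∑ b, (starRingEnd ℂ) (v b) * x b) := by
      simp only [dotProduct, mulVec, outer, Matrix.of_apply, Pi.star_apply, star_sum, star_mul']
      rw [Finset.sum_mul_sum]
      simp only [Finset.mul_sum]
      congr 1; ext a; congr 1; ext b
      simp only [RCLike.star_def, Complex.conj_conj]; ring
    rw [this]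
    exact star_mul_self_nonneg _

lemma trace_outer {d : ℕ} (v : Fin d → ℂ) :
    (outer v).trace = ∑ a, v a * (starRingEnd ℂ) (v a) := by
  simp [Matrix.trace, Matrix.diag, outer]

lemma coe_smul_mat {n : ℕ} (r : ℝ) (M : Mat n) : (r : ℂ) • M = r • M := by
  ext a b
  simp [Matrix.smul_apply, Complex.real_smul]

/-- The symmetrized cross term `ψ φ† + φ ψ†`. -/
def crossM {d : ℕ} (ψ φ : Fin d → ℂ) : Mat d :=
  Matrix.of fun a b => ψ a * (starRingEnd ℂ) (φ b) + φ a * (starRingEnd ℂ) (ψ b)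

lemma crossM_comm {d : ℕ} (ψ φ : Fin d → ℂ) : crossM ψ φ = crossM φ ψ := by
  ext a b; simp only [crossM, Matrix.of_apply]; ring

lemma outer_expand {d : ℕ} (ψ φ : Fin d → ℂ) (t : ℝ) :
    outer (fun a => ψ a + (t:ℂ) * φ a) =
      outer ψ + (t:ℂ) • crossM ψ φ + ((t:ℂ)^2) • outer φ := by
  ext a b
  simp only [outer, crossM, Matrix.add_apply, Matrix.smul_apply, Matrix.of_apply,
    map_add, _root_.map_mul, Complex.conj_ofReal, smul_eq_mul]
  ring

lemma outer_smul_real {d : ℕ} (c : ℝ) (v : Fin d → ℂ) :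
    outer (fun a => (c:ℂ) * v a) = ((c:ℂ)^2) • outer v := by
  ext a b
  simp only [outer, Matrix.smul_apply, Matrix.of_apply, _root_.map_mul, Complex.conj_ofReal,
    smul_eq_mul]
  ring

lemma trace_crossM {d : ℕ} (ψ φ : Fin d → ℂ) :
    (crossM ψ φ).trace = ((2 * (∑ a, ψ a * (starRingEnd ℂ) (φ a)).re : ℝ) : ℂ) := by
  have h1 : (crossM ψ φ).trace
      = (∑ a, ψ a * (starRingEnd ℂ) (φ a)) + ∑ a, φ a * (starRingEnd ℂ) (ψ a) := by
    simp [Matrix.trace, Matrix.diag, crossM, Finset.sum_add_distrib]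
  have h2 : (∑ a, φ a * (starRingEnd ℂ) (ψ a))
      = (starRingEnd ℂ) (∑ a, ψ a * (starRingEnd ℂ) (φ a)) := by
    rw [map_sum]
    apply Finset.sum_congr rfl
    intro a _
    simp only [_root_.map_mul, Complex.conj_conj]
    ring
  rw [h1, h2, Complex.add_conj]

end Aux

section Curve

/-- The key geometric lemma: a smooth curve of states through a vertex forces the
cross term to be proportional to the vertex. -/
lemma curve_lemma {d n k : ℕ} (T : Mat d →ₗ[ℂ] Mat n) {σ : Fin k → Mat n}
    (hinj : Function.Injective σ)
    (hhull : chImage T = convexHull ℝ (Set.range σ))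
    (hext : Set.extremePoints ℝ (chImage T) = Set.range σ)
    {i j : Fin k} (hij : i ≠ j) {ψ φ : Fin d → ℂ}
    (hψ : IsDensity (outer ψ)) (hφ : IsDensity (outer φ))
    (hTψ : T (outer ψ) = σ i) (hTφ : T (outer φ) = σ j) :
    T (crossM ψ φ) = (2 * (∑ a, ψ a * (starRingEnd ℂ) (φ a)).re) • σ i := by
  set r : ℝ := (∑ a, ψ a * (starRingEnd ℂ) (φ a)).re with hr
  set X : Mat n := T (crossM ψ φ) with hX
  have hsub : X - (2*r) • σ i = 0 := by
    apply vertex_pointed hinj hhull i (by rw [hext]; exact Set.mem_range_self i)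
    intro h hmaxh
    rw [map_sub, _root_.map_smul, smul_eq_mul, sub_eq_zero]
    have key : ∀ t : ℝ, t * (h X - 2*r*h (σ i)) ≤ t^2 * (h (σ i) - h (σ j)) := by
      intro t
      set ζ : Fin d → ℂ := fun a => ψ a + (t:ℂ) * φ a with hζ
      set D : ℝ := 1 + 2*t*r + t^2 with hD
      have htr : (outer ζ).trace = ((D : ℝ) : ℂ) := by
        rw [hζ, outer_expand, Matrix.trace_add, Matrix.trace_add, Matrix.trace_smul,
          Matrix.trace_smul, hψ.2, hφ.2, trace_crossM, hD]
        simp only [smul_eq_mul]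
        push_cast
        ring
      have hDsum : D = ∑ a, Complex.normSq (ζ a) := by
        have h1 : ((D : ℝ) : ℂ) = ∑ a, ((Complex.normSq (ζ a) : ℝ) : ℂ) := by
          rw [← htr, trace_outer]
          apply Finset.sum_congr rfl
          intro a _
          rw [Complex.mul_conj]
        rw [← Complex.ofReal_sum] at h1
        exact_mod_cast h1
      have hD0 : 0 ≤ D := by
        rw [hDsum]
        exact Finset.sum_nonneg fun a _ => Complex.normSq_nonneg _
      have hDpos : 0 < D := by
        rcases lt_or_eq_of_le hD0 with h' | h'
        · exact h'
        · exfalso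
          have hz : ∀ a, ζ a = 0 := by
            intro a
            have := (Finset.sum_eq_zero_iff_of_nonneg
              (fun a _ => Complex.normSq_nonneg (ζ a))).mp (hDsum ▸ h'.symm) a (Finset.mem_univ a)
            exact Complex.normSq_eq_zero.mp this
          have hψφ : ∀ a, ψ a = -(t:ℂ) * φ a := by
            intro a
            have := hz a
            rw [hζ] at this
            simp only at this
            linear_combination this
          have houter : outer ψ = ((t:ℂ)^2) • outer φ := by
            ext a b
            simp only [outer, Matrix.smul_apply, Matrix.of_apply, smul_eq_mul]
            rw [hψφ a, hψφ b]
            simp only [_root_.map_mul, map_neg, Complex.conj_ofReal]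
            ring
          have htr1 : (1:ℂ) = (t:ℂ)^2 := by
            have := hψ.2
            rw [houter, Matrix.trace_smul, hφ.2, smul_eq_mul, mul_one] at this
            exact this.symm
          have : outer ψ = outer φ := by rw [houter, ← htr1, one_smul]
          have : σ i = σ j := by rw [← hTψ, ← hTφ, this]
          exact hij (hinj this)
      set c : ℝ := (Real.sqrt D)⁻¹ with hc
      have hc2 : c^2 = D⁻¹ := by
        rw [hc, inv_pow, Real.sq_sqrt hD0]
      have hcsq_pos : 0 < c^2 := by rw [hc2]; exact inv_pos.mpr hDpos
      have hdens : IsDensity (outer (fun a => (c:ℂ) * ζ a)) := by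
        constructor
        · exact outer_posSemidef _
        · rw [outer_smul_real, Matrix.trace_smul, htr, smul_eq_mul]
          rw [show ((c:ℂ)^2) = ((c^2 : ℝ) : ℂ) by push_cast; ring, hc2]
          rw [← Complex.ofReal_mul, inv_mul_cancel₀ (ne_of_gt hDpos)]
          norm_num
      have hmem : T (outer (fun a => (c:ℂ) * ζ a)) ∈ chImage T :=
        ⟨_, hdens, rfl⟩
      have hval : T (outer (fun a => (c:ℂ) * ζ a))
          = (c^2) • (σ i + t • X + (t^2) • σ j) := by
        rw [outer_smul_real, _root_.map_smul, hζ, outer_expand, map_add, map_add,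
          _root_.map_smul, _root_.map_smul, hTψ, hTφ, hX]
        rw [show ((c:ℂ)^2) = ((c^2 : ℝ) : ℂ) by push_cast; ring, coe_smul_mat]
        rw [show ((t:ℂ)) = ((t : ℝ) : ℂ) from rfl, coe_smul_mat]
        rw [show ((t:ℂ)^2) = ((t^2 : ℝ) : ℂ) by push_cast; ring, coe_smul_mat]
      have hineq := hmaxh _ hmem
      rw [hval] at hineq
      simp only [_root_.map_smul, map_add, smul_eq_mul] at hineq
      -- hineq : c^2 * (h σi + t * h X + t^2 * h σj) ≤ h (σ i)
      have hineq2 : h (σ i) + t * h X + t^2 * h (σ j) ≤ D * h (σ i) := by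
        rw [hc2] at hineq
        have := (inv_mul_le_iff₀ hDpos).mp hineq
        linarith
      have hexp : t * (h X - 2*r*h (σ i)) - t^2 * (h (σ i) - h (σ j))
          = (h (σ i) + t * h X + t^2 * h (σ j)) - D * h (σ i) := by
        rw [hD]; ring
      linarith
    have := sq_ineq_zero key
    linarith
  have := sub_eq_zero.mp hsub
  rw [hX] at this
  exact this

lemma ortho_pure {d n k : ℕ} (T : Mat d →ₗ[ℂ] Mat n) {σ : Fin k → Mat n}
    (hinj : Function.Injective σ)
    (hhull : chImage T = convexHull ℝ (Set.range σ))
    (hext : Set.extremePoints ℝ (chImage T) = Set.range σ)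
    {i j : Fin k} (hij : i ≠ j) {ψ φ : Fin d → ℂ}
    (hψ : IsDensity (outer ψ)) (hφ : IsDensity (outer φ))
    (hTψ : T (outer ψ) = σ i) (hTφ : T (outer φ) = σ j) :
    ∑ a, ψ a * (starRingEnd ℂ) (φ a) = 0 := by
  have main : ∀ φ' : Fin d → ℂ, outer φ' = outer φ →
      (∑ a, ψ a * (starRingEnd ℂ) (φ' a)).re = 0 := by
    intro φ' houteq
    have hφ' : IsDensity (outer φ') := houteq ▸ hφ
    have hTφ' : T (outer φ') = σ j := by rw [houteq]; exact hTφ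
    have h1 := curve_lemma T hinj hhull hext hij hψ hφ' hTψ hTφ'
    have h2 := curve_lemma T hinj hhull hext (Ne.symm hij) hφ' hψ hTφ' hTψ
    have hip : (∑ a, φ' a * (starRingEnd ℂ) (ψ a)).re
        = (∑ a, ψ a * (starRingEnd ℂ) (φ' a)).re := by
      have hconj : (∑ a, φ' a * (starRingEnd ℂ) (ψ a))
          = (starRingEnd ℂ) (∑ a, ψ a * (starRingEnd ℂ) (φ' a)) := by
        rw [map_sum]
        apply Finset.sum_congr rfl
        intro a _
        simp only [_root_.map_mul, Complex.conj_conj]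
        ring
      rw [hconj, Complex.conj_re]
    rw [crossM_comm, hip, h1] at h2
    by_contra hne
    have hc : (2 * (∑ a, ψ a * (starRingEnd ℂ) (φ' a)).re) ≠ 0 := by
      simpa using hne
    have : σ i = σ j := smul_right_injective (Mat n) hc h2
    exact hij (hinj this)
  have hre : (∑ a, ψ a * (starRingEnd ℂ) (φ a)).re = 0 := main φ rfl
  have him : (∑ a, ψ a * (starRingEnd ℂ) (φ a)).im = 0 := by
    have houtI : outer (fun a => Complex.I * φ a) = outer φ := by
      ext a b
      simp only [outer, Matrix.of_apply, _root_.map_mul, Complex.conj_I]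
      ring_nf
      simp [Complex.I_sq]
    have := main (fun a => Complex.I * φ a) houtI
    have hsumI : (∑ a, ψ a * (starRingEnd ℂ) (Complex.I * φ a))
        = -Complex.I * ∑ a, ψ a * (starRingEnd ℂ) (φ a) := by
      rw [Finset.mul_sum]
      apply Finset.sum_congr rfl
      intro a _
      simp only [_root_.map_mul, Complex.conj_I]
      ring
    rw [hsumI] at this
    simpa [Complex.mul_re] using this
  exact Complex.ext hre him

lemma exists_pure {d n k : ℕ} (T : Mat d →ₗ[ℂ] Mat n) {σ : Fin k → Mat n}
    (hhull : chImage T = convexHull ℝ (Set.range σ))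
    (hext : Set.extremePoints ℝ (chImage T) = Set.range σ) (i : Fin k) :
    ∃ ψ : Fin d → ℂ, IsDensity (outer ψ) ∧ T (outer ψ) = σ i := by
  classical
  have hexti : σ i ∈ Set.extremePoints ℝ (chImage T) := by
    rw [hext]; exact Set.mem_range_self i
  have hmem : σ i ∈ chImage T := extremePoints_subset hexti
  obtain ⟨ρ, ⟨hPSD, htrρ⟩, hTρ⟩ := hmem
  have hH : ρ.IsHermitian := hPSD.1
  set U : Mat d := (hH.eigenvectorUnitary : Mat d) with hU
  set lam : Fin d → ℝ := hH.eigenvalues with hlam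
  set u : Fin d → Fin d → ℂ := fun m a => U a m with hu
  have hdecomp : ρ = ∑ m, ((lam m : ℝ) : ℂ) • outer (u m) := by
    conv_lhs => rw [hH.spectral_theorem, Unitary.conjStarAlgAut_apply]
    ext a b
    simp only [Matrix.mul_apply, Matrix.diagonal_apply, Matrix.star_apply,
      Matrix.sum_apply, Matrix.smul_apply, outer, Matrix.of_apply, Function.comp_apply,
      smul_eq_mul, RCLike.star_def, mul_ite, mul_zero, ite_mul, zero_mul,
      Finset.sum_ite_eq', Finset.mem_univ, if_true]
    apply Finset.sum_congr rfl
    intro m _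
    have hcoe : ∀ x : ℝ, (RCLike.ofReal x : ℂ) = Complex.ofReal x := fun x => rfl
    simp only [hu, hU, hlam, hcoe]
    ring
  have hcolunit : ∀ m, (outer (u m)).trace = 1 := by
    intro m
    rw [trace_outer]
    have hUU : star U * U = 1 := by
      rw [hU]
      exact Unitary.coe_star_mul_self hH.eigenvectorUnitary
    have hen : (star U * U) m m = (1 : Mat d) m m := by rw [hUU]
    simp only [Matrix.mul_apply, Matrix.star_apply, Matrix.one_apply_eq, RCLike.star_def] at hen
    rw [← hen]
    apply Finset.sum_congr rfl
    intro a _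
    simp [hu]
    ring
  have hlam0 : ∀ m, 0 ≤ lam m := fun m => hPSD.eigenvalues_nonneg m
  have hdens : ∀ m, IsDensity (outer (u m)) := fun m => ⟨outer_posSemidef _, hcolunit m⟩
  have hmemC : ∀ m, T (outer (u m)) ∈ chImage T := fun m => ⟨_, hdens m, rfl⟩
  have hsum1 : ∑ m, lam m = 1 := by
    have h1 : (1:ℂ) = ∑ m, ((lam m : ℝ):ℂ) := by
      rw [← htrρ]
      conv_lhs => rw [hdecomp]
      rw [Matrix.trace_sum]
      apply Finset.sum_congr rfl
      intro m _
      rw [Matrix.trace_smul, hcolunit m, smul_eq_mul, mul_one]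
    rw [← Complex.ofReal_sum] at h1
    exact_mod_cast h1.symm
  have hσsum : ∑ m, lam m • T (outer (u m)) = σ i := by
    rw [← hTρ]
    show ∑ m, lam m • T (outer (u m)) = T ρ
    conv_rhs => rw [hdecomp]
    rw [map_sum]
    apply Finset.sum_congr rfl
    intro m _
    rw [_root_.map_smul, coe_smul_mat]
  have hCconv : Convex ℝ (chImage T) := hhull ▸ convex_convexHull ℝ _
  have hall := extreme_combo hCconv hexti Finset.univ lam (fun m => T (outer (u m)))
    (fun m _ => hlam0 m) hsum1 (fun m _ => hmemC m) hσsum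
  obtain ⟨m, _, hmne⟩ := Finset.exists_ne_zero_of_sum_ne_zero
    (s := (Finset.univ : Finset (Fin d))) (f := lam) (by rw [hsum1]; exact one_ne_zero)
  exact ⟨u m, hdens m, hall m (Finset.mem_univ m) hmne⟩

end Curve

/-- if the image of a channel is a convex polytope with `k` vertices, then
its affine dimension is at most `k - 1`, `k ≤ d`, and hence the dimension is at most
`d - 1`. -/
theorem stmt8 {d n k : ℕ} (T : Mat d →ₗ[ℂ] Mat n) (hT : IsChannel T)
    (σ : Fin k → Mat n) (hinj : Function.Injective σ)
    (hhull : chImage T = convexHull ℝ (Set.range σ))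
    (hext : Set.extremePoints ℝ (chImage T) = Set.range σ) :
    Module.finrank ℝ (vectorSpan ℝ (chImage T)) ≤ k - 1 ∧ k ≤ d ∧
      Module.finrank ℝ (vectorSpan ℝ (chImage T)) ≤ d - 1 := by
  classical
  -- Part 1: dimension bound from the number of vertices
  have hvs : vectorSpan ℝ (chImage T) = vectorSpan ℝ (Set.range σ) := by
    rw [hhull, ← direction_affineSpan, affineSpan_convexHull, direction_affineSpan]
  have hdim : Module.finrank ℝ (vectorSpan ℝ (chImage T)) ≤ k - 1 := by
    rcases Nat.eq_zero_or_pos k with hk | hk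
    · subst hk
      rw [hvs, Set.range_eq_empty, vectorSpan_empty]
      simp
    · obtain ⟨k', rfl⟩ : ∃ k', k = k' + 1 := ⟨k - 1, (Nat.succ_pred_eq_of_pos hk).symm⟩
      rw [hvs]
      simpa using finrank_vectorSpan_range_le ℝ σ (by simp : Fintype.card (Fin (k'+1)) = k' + 1)
  -- Part 2: k ≤ d via orthonormal pure preimages of the vertices
  have hpure : ∀ i : Fin k, ∃ ψ : Fin d → ℂ, IsDensity (outer ψ) ∧ T (outer ψ) = σ i :=
    fun i => exists_pure T hhull hext i
  choose ψ hψd hψT using hpure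
  have hkd : k ≤ d := by
    set f : Fin k → EuclideanSpace ℂ (Fin d) :=
      fun i => (WithLp.equiv 2 (Fin d → ℂ)).symm (ψ i) with hf
    have horth : Orthonormal ℂ f := by
      rw [orthonormal_iff_ite]
      intro i j
      by_cases hij : i = j
      · subst hij
        simp only [if_pos rfl]
        have htr : (∑ a, ψ i a * (starRingEnd ℂ) (ψ i a)) = 1 := by
          rw [← trace_outer]; exact (hψd i).2
        rw [PiLp.inner_apply]
        simp only [RCLike.inner_apply, hf, WithLp.equiv_symm_apply, WithLp.ofLp_toLp]
        rw [← htr]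
        apply Finset.sum_congr rfl
        intro a _
        ring
      · rw [if_neg hij]
        have h0 := ortho_pure T hinj hhull hext hij (hψd i) (hψd j) (hψT i) (hψT j)
        rw [PiLp.inner_apply]
        simp only [RCLike.inner_apply, hf, WithLp.equiv_symm_apply, WithLp.ofLp_toLp]
        have hconj : (∑ a, ψ j a * (starRingEnd ℂ) (ψ i a))
            = (starRingEnd ℂ) (∑ a, ψ i a * (starRingEnd ℂ) (ψ j a)) := by
          rw [map_sum]
          apply Finset.sum_congr rfl
          intro a _
          simp only [_root_.map_mul, Complex.conj_conj]
          try ring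
        rw [hconj, h0, map_zero]
    calc k = Fintype.card (Fin k) := by simp
      _ ≤ Module.finrank ℂ (EuclideanSpace ℂ (Fin d)) :=
          horth.linearIndependent.fintype_card_le_finrank
      _ = d := finrank_euclideanSpace_fin
  exact ⟨hdim, hkd, le_trans hdim (Nat.sub_le_sub_right hkd 1)⟩
end
end

section
/- An entanglement breaking quantum channel T : M_d(ℂ) → M_d(ℂ) cannot act as the identity on a matrix subalgebra End(V) for any subspace V ⊆ ℂᵈ of dimension r ≥ 2. Equivalently, if T(A) = A for all A ∈ End(V) with dim V ≥ 2, then T is not entanglement breaking. -/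
open Matrix Kronecker BigOperators Filter
open scoped InnerProductSpace ComplexOrder

noncomputable section

section Aux

open Finset

local notation "conj'" => starRingEnd ℂ

/-- helper: nonneg trace of product of PSD matrices -/
lemma trace_conjTranspose_mul_self_nonneg {n : ℕ} (M : Mat n) : (0:ℂ) ≤ (Mᴴ * M).trace := by
  rw [Matrix.trace]
  refine Finset.sum_nonneg fun i _ => ?_
  rw [Matrix.diag_apply, Matrix.mul_apply]
  refine Finset.sum_nonneg fun j _ => ?_
  simpa [Matrix.conjTranspose_apply] using star_mul_self_nonneg (M j i)

lemma trace_mul_nonneg_of_posSemidef {n : ℕ} {A B : Mat n}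
    (hA : A.PosSemidef) (hB : B.PosSemidef) : (0:ℂ) ≤ (A * B).trace := by
  have key : ∀ M : Mat n, M.PosSemidef → ∃ C : Mat n, M = Cᴴ * C := fun M hM => by
    open scoped MatrixOrder in
    obtain ⟨X, hX, -, hXM⟩ := CFC.exists_sqrt_of_isSelfAdjoint_of_quasispectrumRestricts
      hM.isHermitian (QuasispectrumRestricts.nnreal_of_nonneg hM.nonneg)
    exact ⟨X, by rw [← hXM, ← Matrix.star_eq_conjTranspose, hX.star_eq]⟩
  obtain ⟨C, rfl⟩ := key A hA
  obtain ⟨D, rfl⟩ := key B hB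
  have h1 : ((C * Dᴴ)ᴴ * (C * Dᴴ)).trace = (Cᴴ * C * (Dᴴ * D)).trace := by
    rw [Matrix.conjTranspose_mul, Matrix.conjTranspose_conjTranspose, Matrix.mul_assoc,
      Matrix.trace_mul_comm]
    congr 1
    noncomm_ring
  rw [← h1]
  exact trace_conjTranspose_mul_self_nonneg _

lemma conj_dot {d : ℕ} (x y : Fin d → ℂ) :
    star y ⬝ᵥ x = conj' (star x ⬝ᵥ y) := by
  rw [dotProduct, dotProduct, map_sum]
  refine Finset.sum_congr rfl fun i _ => ?_
  simp only [Pi.star_apply, Complex.star_def]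
  rw [(starRingEnd ℂ).map_mul, Complex.conj_conj]
  ring

/-- Existence of an orthonormal pair fixed by `P`. -/
lemma exists_ortho_pair {d : ℕ} (P : Mat d) (hP : P.IsHermitian) (hP2 : P * P = P)
    (hrank : 2 ≤ P.rank) :
    ∃ u v : Fin d → ℂ, P *ᵥ u = u ∧ P *ᵥ v = v ∧
      star u ⬝ᵥ u = 1 ∧ star v ⬝ᵥ v = 1 ∧ star u ⬝ᵥ v = 0 ∧ star v ⬝ᵥ u = 0 := by
  classical
  have hrank' : 2 ≤ Module.finrank ℂ (LinearMap.range P.mulVecLin) := hrank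
  obtain ⟨f, hf⟩ := exists_linearIndependent_of_le_finrank hrank'
  have hf' : LinearIndependent ℂ (fun i : Fin 2 => ((f i : Fin d → ℂ))) :=
    hf.map' (Submodule.subtype _) (Submodule.ker_subtype _)
  set x : Fin d → ℂ := (f 0 : Fin d → ℂ) with hxdef
  set y : Fin d → ℂ := (f 1 : Fin d → ℂ) with hydef
  have hfix : ∀ w : Fin d → ℂ, w ∈ LinearMap.range P.mulVecLin → P *ᵥ w = w := by
    rintro w ⟨z, rfl⟩
    rw [Matrix.mulVecLin_apply, Matrix.mulVec_mulVec, hP2]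
  have hPx : P *ᵥ x = x := hfix _ (f 0).2
  have hPy : P *ᵥ y = y := hfix _ (f 1).2
  have hind : ∀ a b : ℂ, a • x + b • y = 0 → a = 0 ∧ b = 0 := by
    intro a b hab
    have := Fintype.linearIndependent_iff.mp hf' ![a, b] (by
      rw [Fin.sum_univ_two]; exact hab)
    exact ⟨this 0, this 1⟩
  have hxne : x ≠ 0 := by
    intro h
    have := (hind 1 0 (by simp [h])).1
    norm_num at this
  -- inner products
  have ip_self : ∀ w : Fin d → ℂ, star w ⬝ᵥ w = ((∑ i, Complex.normSq (w i) : ℝ) : ℂ) := by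
    intro w
    simp only [dotProduct, Pi.star_apply, Complex.star_def, Complex.ofReal_sum]
    exact Finset.sum_congr rfl fun i _ => by rw [← Complex.normSq_eq_conj_mul_self]
  have n2_pos : ∀ w : Fin d → ℂ, w ≠ 0 → 0 < ∑ i, Complex.normSq (w i) := by
    intro w hw
    have hnn : 0 ≤ ∑ i, Complex.normSq (w i) :=
      Finset.sum_nonneg fun i _ => Complex.normSq_nonneg (w i)
    rcases hnn.lt_or_eq with h | h
    · exact h
    · exfalso
      apply hw
      funext i
      have := (Finset.sum_eq_zero_iff_of_nonneg
        (fun i _ => Complex.normSq_nonneg (w i))).mp h.symm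
      exact Complex.normSq_eq_zero.mp (this i (Finset.mem_univ i))
  set a : ℝ := ∑ i, Complex.normSq (x i) with hadef
  have ha : 0 < a := n2_pos x hxne
  set c : ℂ := star x ⬝ᵥ y with hcdef
  set y' : Fin d → ℂ := y - (c / (a:ℂ)) • x with hy'def
  have haC : (a : ℂ) ≠ 0 := by exact_mod_cast ha.ne'
  have hxy' : star x ⬝ᵥ y' = 0 := by
    rw [hy'def, dotProduct_sub, dotProduct_smul, ip_self, ← hadef, ← hcdef,
      smul_eq_mul, div_mul_cancel₀ _ haC, sub_self]
  have hy'x : star y' ⬝ᵥ x = 0 := by rw [conj_dot, hxy', map_zero]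
  have hPy' : P *ᵥ y' = y' := by
    rw [hy'def, Matrix.mulVec_sub, Matrix.mulVec_smul, hPx, hPy]
  have hy'ne : y' ≠ 0 := by
    intro h
    have h0 : y - (c / (a:ℂ)) • x = 0 := by rw [← hy'def]; exact h
    have hyx : y = (c / (a:ℂ)) • x := sub_eq_zero.mp h0
    have h2 : (c / (a:ℂ)) • x + (-1 : ℂ) • y = 0 := by
      rw [neg_one_smul, hyx, add_neg_cancel]
    have := (hind _ _ h2).2
    norm_num at this
  set b : ℝ := ∑ i, Complex.normSq (y' i) with hbdef
  have hb : 0 < b := n2_pos y' hy'ne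
  refine ⟨((((Real.sqrt a)⁻¹ : ℝ)) : ℂ) • x, ((((Real.sqrt b)⁻¹ : ℝ)) : ℂ) • y',
    ?_, ?_, ?_, ?_, ?_, ?_⟩
  · rw [Matrix.mulVec_smul, hPx]
  · rw [Matrix.mulVec_smul, hPy']
  · rw [star_smul, smul_dotProduct, dotProduct_smul, ip_self, ← hadef]
    simp only [Complex.star_def, Complex.conj_ofReal, smul_eq_mul]
    norm_cast
    rw [← mul_assoc, ← mul_inv, Real.mul_self_sqrt ha.le, inv_mul_cancel₀ ha.ne']
  · rw [star_smul, smul_dotProduct, dotProduct_smul, ip_self, ← hbdef]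
    simp only [Complex.star_def, Complex.conj_ofReal, smul_eq_mul]
    norm_cast
    rw [← mul_assoc, ← mul_inv, Real.mul_self_sqrt hb.le, inv_mul_cancel₀ hb.ne']
  · rw [star_smul, smul_dotProduct, dotProduct_smul, hxy']
    simp
  · rw [star_smul, smul_dotProduct, dotProduct_smul, hy'x]
    simp

/-- entrywise description of `tensorFun T id`. -/
lemma tensorFun_apply_entry {d : ℕ} (T : Mat d →ₗ[ℂ] Mat d)
    (ρ : Matrix (Fin d × Fin d) (Fin d × Fin d) ℂ) (a b c e : Fin d) :
    tensorFun (T ·) (id : Mat d → Mat d) ρ (a, b) (c, e) =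
      T (Matrix.of fun i j => ρ (i, b) (j, e)) a c := by
  classical
  have hR : (Matrix.of fun i j => ρ (i, b) (j, e) : Mat d)
      = ∑ i : Fin d, ∑ j : Fin d, ρ (i, b) (j, e) • Matrix.single i j 1 := by
    conv_lhs => rw [Matrix.matrix_eq_sum_single (Matrix.of fun i j => ρ (i, b) (j, e))]
    refine Finset.sum_congr rfl fun i _ => Finset.sum_congr rfl fun j _ => ?_
    rw [Matrix.smul_single, smul_eq_mul, mul_one, Matrix.of_apply]
  have hrhs : T (Matrix.of fun i j => ρ (i, b) (j, e)) a c
      = ∑ i : Fin d, ∑ j : Fin d, ρ (i, b) (j, e) * T (Matrix.single i j 1) a c := by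
    rw [hR, map_sum, Matrix.sum_apply]
    refine Finset.sum_congr rfl fun i _ => ?_
    rw [map_sum, Matrix.sum_apply]
    refine Finset.sum_congr rfl fun j _ => ?_
    rw [LinearMap.map_smul, Matrix.smul_apply, smul_eq_mul]
  rw [hrhs]
  unfold tensorFun
  simp only [Matrix.sum_apply, Matrix.smul_apply, Matrix.kroneckerMap_apply, id_eq, smul_eq_mul]
  refine Finset.sum_congr rfl fun i _ => ?_
  refine Finset.sum_congr rfl fun j _ => ?_
  have hent : ∀ k l : Fin d,
      ρ (i, k) (j, l) * (T (Matrix.single i j 1) a c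
          * (Matrix.single k l (1:ℂ)) b e)
      = if k = b ∧ l = e then ρ (i, k) (j, l) * T (Matrix.single i j 1) a c else 0 := by
    intro k l
    rcases eq_or_ne k b with rfl | hk
    · rcases eq_or_ne l e with rfl | hl
      · simp [Matrix.single]
      · simp [Matrix.single, hl]
    · simp [Matrix.single, hk]
  simp only [hent]
  have hl : ∀ k : Fin d, (∑ l : Fin d, if k = b ∧ l = e then
        ρ (i, k) (j, l) * T (Matrix.single i j 1) a c else 0)
      = if k = b then ρ (i, k) (j, e) * T (Matrix.single i j 1) a c else 0 := by
    intro k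
    rcases eq_or_ne k b with rfl | hk
    · simp
    · simp [hk]
  simp only [hl]
  simp

end Aux

/-- an entanglement breaking channel cannot act as the identity on a matrix
subalgebra `End(V)` with `dim V ≥ 2`.  The subspace `V` is encoded by a Hermitian
idempotent `P` of rank at least `2`; operators in `End(V)` are those with `A = PAP`. -/
theorem stmt10 {d : ℕ} (T : Mat d →ₗ[ℂ] Mat d) (hT : IsChannel T)
    (P : Mat d) (hP : P.IsHermitian) (hP2 : P * P = P) (hrank : 2 ≤ P.rank)
    (hfix : ∀ A : Mat d, A = P * A * P → T A = A) :
    ¬ IsEntanglementBreaking T := by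
  classical
  intro hEB
  obtain ⟨u, v, hPu, hPv, huu, hvv, huv, hvu⟩ := exists_ortho_pair P hP hP2 hrank
  set ψ : Fin d × Fin d → ℂ := fun p => u p.1 * v p.2 - v p.1 * u p.2 with hψ
  set ρ : Matrix (Fin d × Fin d) (Fin d × Fin d) ℂ :=
    Matrix.of (fun p q => (2:ℂ)⁻¹ * (ψ p * (starRingEnd ℂ) (ψ q))) with hρdef
  have hρ : ∀ p q : Fin d × Fin d, ρ p q = (2:ℂ)⁻¹ * (ψ p * (starRingEnd ℂ) (ψ q)) :=
    fun p q => rfl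
  have dotc : ∀ w z : Fin d → ℂ, (∑ i, z i * (starRingEnd ℂ) (w i)) = star w ⬝ᵥ z := by
    intro w z
    rw [dotProduct]
    refine Finset.sum_congr rfl fun i _ => ?_
    simp only [Pi.star_apply, Complex.star_def]
    ring
  -- key sum
  have hsum : (∑ p : Fin d × Fin d, ψ p * (starRingEnd ℂ) (ψ p)) = 2 := by
    rw [Fintype.sum_prod_type]
    have hexp : ∀ i : Fin d, (∑ k : Fin d, ψ (i, k) * (starRingEnd ℂ) (ψ (i, k)))
        = (u i * (starRingEnd ℂ) (u i)) * (∑ k, v k * (starRingEnd ℂ) (v k))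
          - (u i * (starRingEnd ℂ) (v i)) * (∑ k, v k * (starRingEnd ℂ) (u k))
          - (v i * (starRingEnd ℂ) (u i)) * (∑ k, u k * (starRingEnd ℂ) (v k))
          + (v i * (starRingEnd ℂ) (v i)) * (∑ k, u k * (starRingEnd ℂ) (u k)) := by
      intro i
      simp only [Finset.mul_sum]
      rw [← Finset.sum_sub_distrib, ← Finset.sum_sub_distrib, ← Finset.sum_add_distrib]
      refine Finset.sum_congr rfl fun k _ => ?_
      simp only [hψ, _root_.map_sub, _root_.map_mul]
      ring
    simp only [hexp]
    rw [Finset.sum_add_distrib, Finset.sum_sub_distrib, Finset.sum_sub_distrib,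
      ← Finset.sum_mul, ← Finset.sum_mul, ← Finset.sum_mul, ← Finset.sum_mul]
    rw [dotc u u, huu, dotc v v, hvv, dotc v u, hvu, dotc u v, huv]
    norm_num
  -- density
  have htr : ρ.trace = 1 := by
    rw [Matrix.trace]
    simp only [Matrix.diag_apply, hρ]
    rw [← Finset.mul_sum, hsum]
    norm_num
  have hherm : ρ.IsHermitian := by
    ext p q
    simp only [Matrix.conjTranspose_apply, hρ, Complex.star_def, _root_.map_mul, _root_.map_sub, map_inv₀,
      map_ofNat, Complex.conj_conj]
    ring
  have h2nn : (0:ℂ) ≤ (2:ℂ)⁻¹ := by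
    have h22 : ((2⁻¹ : ℝ) : ℂ) = (2:ℂ)⁻¹ := by norm_num
    rw [← h22]
    exact Complex.zero_le_real.mpr (by norm_num)
  have hpsd : ρ.PosSemidef := by
    refine Matrix.posSemidef_iff_dotProduct_mulVec.mpr ⟨hherm, fun z => ?_⟩
    set s : ℂ := ∑ p, (starRingEnd ℂ) (z p) * ψ p with hs
    set w : ℂ := ∑ q, (starRingEnd ℂ) (ψ q) * z q with hw
    have hmv : ∀ p, (ρ *ᵥ z) p = (2:ℂ)⁻¹ * ψ p * w := by
      intro p
      rw [Matrix.mulVec, dotProduct, hw, Finset.mul_sum]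
      refine Finset.sum_congr rfl fun q _ => ?_
      rw [hρ]; ring
    have hval : star z ⬝ᵥ (ρ *ᵥ z) = (2:ℂ)⁻¹ * (s * w) := by
      rw [dotProduct]
      simp only [hmv, Pi.star_apply, Complex.star_def]
      rw [hs, Finset.sum_mul, Finset.mul_sum]
      refine Finset.sum_congr rfl fun p _ => ?_
      ring
    have hws : w = star s := by
      rw [hw, hs, Complex.star_def, _root_.map_sum]
      refine Finset.sum_congr rfl fun p _ => ?_
      rw [_root_.map_mul, Complex.conj_conj]
      ring
    rw [hval, hws, mul_comm s (star s)]
    exact mul_nonneg h2nn (star_mul_self_nonneg s)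
  have hdens : IsDensity ρ := ⟨hpsd, htr⟩
  -- `P`-invariance of the columns of `ψ`
  have hcol : ∀ b : Fin d, P *ᵥ (fun s => ψ (s, b)) = fun s => ψ (s, b) := by
    intro b
    have hc : (fun s => ψ (s, b)) = (v b • u - u b • v : Fin d → ℂ) := by
      funext t
      simp only [hψ, Pi.sub_apply, Pi.smul_apply, smul_eq_mul]
      ring
    rw [hc, Matrix.mulVec_sub, Matrix.mulVec_smul, Matrix.mulVec_smul, hPu, hPv]
  have hconj : ∀ (w : Fin d → ℂ), P *ᵥ w = w →
      ∀ j, (∑ t, (starRingEnd ℂ) (w t) * P t j) = (starRingEnd ℂ) (w j) := by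
    intro w hw j
    calc (∑ t, (starRingEnd ℂ) (w t) * P t j)
        = (starRingEnd ℂ) (∑ t, P j t * w t) := by
          rw [_root_.map_sum]
          refine Finset.sum_congr rfl fun t _ => ?_
          rw [_root_.map_mul, show (starRingEnd ℂ) (P j t) = P t j from hP.apply t j]
          ring
      _ = (starRingEnd ℂ) (w j) := by
          rw [show (∑ t, P j t * w t) = (P *ᵥ w) j from rfl, hw]
  -- fixed point of the tensorized channel
  have hfixρ : tensorFun (T ·) (id : Mat d → Mat d) ρ = ρ := by
    ext ⟨a, b⟩ ⟨c, e⟩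
    rw [tensorFun_apply_entry]
    have hM : (Matrix.of fun i j => ρ (i, b) (j, e) : Mat d)
        = P * (Matrix.of fun i j => ρ (i, b) (j, e)) * P := by
      ext i j
      have hPM : ∀ t, (P * (Matrix.of fun i j => ρ (i, b) (j, e))) i t
          = (2:ℂ)⁻¹ * (ψ (i, b) * (starRingEnd ℂ) (ψ (t, e))) := by
        intro t
        rw [Matrix.mul_apply]
        calc (∑ x, P i x * (Matrix.of fun i j => ρ (i, b) (j, e)) x t)
            = (2:ℂ)⁻¹ * (starRingEnd ℂ) (ψ (t, e)) * (∑ x, P i x * ψ (x, b)) := by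
              rw [Finset.mul_sum]
              refine Finset.sum_congr rfl fun x _ => ?_
              rw [Matrix.of_apply, hρ]
              ring
          _ = (2:ℂ)⁻¹ * (ψ (i, b) * (starRingEnd ℂ) (ψ (t, e))) := by
              rw [show (∑ x, P i x * ψ (x, b)) = (P *ᵥ (fun s => ψ (s, b))) i from rfl,
                hcol b]
              ring
      calc (Matrix.of fun i j => ρ (i, b) (j, e) : Mat d) i j
          = (2:ℂ)⁻¹ * ψ (i, b) * (starRingEnd ℂ) (ψ (j, e)) := by
            rw [Matrix.of_apply, hρ]; ring
        _ = (2:ℂ)⁻¹ * ψ (i, b) * (∑ t, (starRingEnd ℂ) (ψ (t, e)) * P t j) := by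
            rw [hconj (fun t => ψ (t, e)) (hcol e) j]
        _ = ∑ t, (P * (Matrix.of fun i j => ρ (i, b) (j, e))) i t * P t j := by
            rw [Finset.mul_sum]
            refine Finset.sum_congr rfl fun t _ => ?_
            rw [hPM t]
            ring
        _ = (P * (Matrix.of fun i j => ρ (i, b) (j, e)) * P) i j := by
            rw [Matrix.mul_apply]
    rw [hfix _ hM, Matrix.of_apply]
  -- separability and the flip witness
  have hsep := hEB ρ hdens
  rw [hfixρ] at hsep
  obtain ⟨m, cw, A, B, hc0, hc1, hA, hB, heq⟩ := hsep
  rw [Fintype.sum_prod_type] at hsum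
  have hWval : (∑ i : Fin d, ∑ k : Fin d, ρ (k, i) (i, k)) = -1 := by
    have h1 : ∀ i k : Fin d, ρ (k, i) (i, k)
        = -((2:ℂ)⁻¹ * (ψ (i, k) * (starRingEnd ℂ) (ψ (i, k)))) := by
      intro i k
      rw [hρ]
      have h2 : ψ (k, i) = -ψ (i, k) := by
        simp only [hψ]
        ring
      rw [h2]
      ring
    simp only [h1]
    simp only [Finset.sum_neg_distrib, ← Finset.mul_sum]
    rw [hsum]
    norm_num
  have hWsep : (∑ i : Fin d, ∑ k : Fin d, ρ (k, i) (i, k))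
      = ∑ n, (cw n : ℂ) * (A n * B n).trace := by
    have hrhs : ∀ n, (cw n : ℂ) * (A n * B n).trace
        = ∑ i : Fin d, ∑ k : Fin d, (cw n : ℂ) * (A n k i * B n i k) := by
      intro n
      rw [Matrix.trace]
      simp only [Matrix.diag_apply, Matrix.mul_apply]
      rw [Finset.mul_sum, Finset.sum_comm]
      refine Finset.sum_congr rfl fun i _ => ?_
      rw [Finset.mul_sum]
    simp only [hrhs, heq, Matrix.sum_apply, Matrix.smul_apply, Matrix.kroneckerMap_apply,
      smul_eq_mul]
    calc (∑ i : Fin d, ∑ k : Fin d, ∑ n, (cw n : ℂ) * (A n k i * B n i k))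
        = ∑ i : Fin d, ∑ n, ∑ k : Fin d, (cw n : ℂ) * (A n k i * B n i k) :=
          Finset.sum_congr rfl fun i _ => Finset.sum_comm
      _ = ∑ n, ∑ i : Fin d, ∑ k : Fin d, (cw n : ℂ) * (A n k i * B n i k) :=
          Finset.sum_comm
  have hnn : (0:ℂ) ≤ ∑ n, (cw n : ℂ) * (A n * B n).trace := by
    refine Finset.sum_nonneg fun n _ => mul_nonneg ?_
      (trace_mul_nonneg_of_posSemidef (hA n).1 (hB n).1)
    exact Complex.zero_le_real.mpr (hc0 n)
  rw [← hWsep, hWval] at hnn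
  have hre := (Complex.le_def.mp hnn).1
  norm_num at hre
end
end

section
/- Every essentially classical-quantum channel T : M_d(ℂ) → M_n(ℂ) is universally image additive: for any quantum channel T₂ : M_{d'}(ℂ) → M_{n'}(ℂ) and any unit vector ψ ∈ ℂᵈ ⊗ ℂ^{d'}, there exists a separable density matrix ρ_sep with (T⊗T₂)(ψψ*) = (T⊗T₂)(ρ_sep). -/
open Matrix Kronecker BigOperators Filter
open scoped InnerProductSpace ComplexOrder

noncomputable section

lemma posSemidef_sum' {ι : Type*} {m : Type*} [Fintype m] (s : Finset ι)
    (f : ι → Matrix m m ℂ) (h : ∀ i ∈ s, (f i).PosSemidef) : (∑ i ∈ s, f i).PosSemidef := by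
  classical
  induction s using Finset.induction_on with
  | empty => simpa using Matrix.PosSemidef.zero
  | @insert a s ha ih =>
    rw [Finset.sum_insert ha]
    exact (h a (Finset.mem_insert_self a s)).add (ih fun i hi => h i (Finset.mem_insert_of_mem hi))

lemma posSemidef_real_smul {m : Type*} [Fintype m] {A : Matrix m m ℂ} (hA : A.PosSemidef)
    {r : ℝ} (hr : 0 ≤ r) : ((r : ℂ) • A).PosSemidef := by
  refine .of_dotProduct_mulVec_nonneg ?_ fun x => ?_
  · show ((r : ℂ) • A)ᴴ = _
    rw [conjTranspose_smul, hA.1.eq]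
    simp [Complex.conj_ofReal]
  · rw [smul_mulVec, dotProduct_smul, smul_eq_mul]
    exact mul_nonneg (Complex.zero_le_real.mpr hr) (hA.dotProduct_mulVec_nonneg x)

open scoped MatrixOrder in
lemma posSemidef_kronecker {d₁ d₂ : ℕ} {A : Mat d₁} {B : Mat d₂} (hA : A.PosSemidef)
    (hB : B.PosSemidef) : (A ⊗ₖ B).PosSemidef := by
  obtain ⟨C, hC⟩ := CStarAlgebra.nonneg_iff_eq_star_mul_self.mp hA.nonneg
  obtain ⟨D, hD⟩ := CStarAlgebra.nonneg_iff_eq_star_mul_self.mp hB.nonneg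
  rw [star_eq_conjTranspose] at hC hD
  have hCD : Cᴴ ⊗ₖ Dᴴ = (C ⊗ₖ D)ᴴ := by
    ext ⟨a, b⟩ ⟨c, e⟩
    simp [conjTranspose_apply, mul_comm]
  rw [hC, hD, Matrix.mul_kronecker_mul, hCD]
  exact Matrix.posSemidef_conjTranspose_mul_self _

open scoped MatrixOrder in
lemma psd_trace_eq_zero {m : Type*} [Fintype m] [DecidableEq m] {A : Matrix m m ℂ}
    (hA : A.PosSemidef) (h : A.trace = 0) : A = 0 := by
  obtain ⟨C, rfl⟩ := CStarAlgebra.nonneg_iff_eq_star_mul_self.mp hA.nonneg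
  suffices hC : C = 0 by simp [hC]
  have htr : (Cᴴ * C).trace = ((∑ j, ∑ i, Complex.normSq (C i j) : ℝ) : ℂ) := by
    push_cast
    simp only [Matrix.trace, Matrix.diag_apply, Matrix.mul_apply, conjTranspose_apply]
    refine Finset.sum_congr rfl fun j _ => Finset.sum_congr rfl fun i _ => ?_
    rw [Complex.star_def, ← Complex.normSq_eq_conj_mul_self]
  rw [star_eq_conjTranspose, htr] at h
  have h2 : ∑ j, ∑ i, Complex.normSq (C i j) = 0 := by exact_mod_cast h
  ext i j
  have h3 := (Finset.sum_eq_zero_iff_of_nonneg (fun j _ =>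
    Finset.sum_nonneg fun i _ => Complex.normSq_nonneg _)).mp h2 j (Finset.mem_univ j)
  have h4 := (Finset.sum_eq_zero_iff_of_nonneg (fun i _ =>
    Complex.normSq_nonneg _)).mp h3 i (Finset.mem_univ i)
  simpa using Complex.normSq_eq_zero.mp h4

lemma sum_swap₅ {α : Type*} [AddCommMonoid α] {ι₁ ι₂ ι₃ ι₄ ι₅ : Type*}
    [Fintype ι₁] [Fintype ι₂] [Fintype ι₃] [Fintype ι₄] [Fintype ι₅]
    (f : ι₁ → ι₂ → ι₃ → ι₄ → ι₅ → α) :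
    ∑ a, ∑ b, ∑ c, ∑ d, ∑ e, f a b c d e = ∑ e, ∑ c, ∑ d, ∑ a, ∑ b, f a b c d e := by
  calc ∑ a, ∑ b, ∑ c, ∑ d, ∑ e, f a b c d e
      = ∑ x : ι₁ × ι₂ × ι₃ × ι₄ × ι₅, f x.1 x.2.1 x.2.2.1 x.2.2.2.1 x.2.2.2.2 := by
        simp [Fintype.sum_prod_type]
    _ = ∑ y : ι₅ × ι₃ × ι₄ × ι₁ × ι₂, f y.2.2.2.1 y.2.2.2.2 y.2.1 y.2.2.1 y.1 := by
        refine Fintype.sum_equiv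
          ⟨fun x => (x.2.2.2.2, x.2.2.1, x.2.2.2.1, x.1, x.2.1),
           fun y => (y.2.2.2.1, y.2.2.2.2, y.2.1, y.2.2.1, y.1),
           fun ⟨a, b, c, d, e⟩ => rfl, fun ⟨e, c, d, a, b⟩ => rfl⟩ _ _ fun ⟨a, b, c, d, e⟩ => rfl
    _ = ∑ e, ∑ c, ∑ d, ∑ a, ∑ b, f a b c d e := by simp [Fintype.sum_prod_type]

lemma sum_swap₃ {α : Type*} [AddCommMonoid α] {ι₁ ι₂ ι₃ : Type*}
    [Fintype ι₁] [Fintype ι₂] [Fintype ι₃] (f : ι₁ → ι₂ → ι₃ → α) :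
    ∑ a, ∑ b, ∑ c, f a b c = ∑ c, ∑ a, ∑ b, f a b c := by
  calc ∑ a, ∑ b, ∑ c, f a b c
      = ∑ x : ι₁ × ι₂ × ι₃, f x.1 x.2.1 x.2.2 := by simp [Fintype.sum_prod_type]
    _ = ∑ y : ι₃ × ι₁ × ι₂, f y.2.1 y.2.2 y.1 := by
        refine Fintype.sum_equiv
          ⟨fun x => (x.2.2, x.1, x.2.1), fun y => (y.2.1, y.2.2, y.1),
           fun ⟨a, b, c⟩ => rfl, fun ⟨c, a, b⟩ => rfl⟩ _ _ fun ⟨a, b, c⟩ => rfl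
    _ = ∑ c, ∑ a, ∑ b, f a b c := by simp [Fintype.sum_prod_type]
open scoped MatrixOrder in
lemma exists_unit_fix {d : ℕ} (M : Mat d) (hM : M.PosSemidef) (h1 : (1 - M).PosSemidef)
    (hn : opNorm M = 1) :
    ∃ e : Fin d → ℂ, star e ⬝ᵥ e = 1 ∧ star e ⬝ᵥ (M *ᵥ e) = 1 := by
  set A := Matrix.toEuclideanCLM (𝕜 := ℂ) (n := Fin d) M with hAdef
  have hAn : ‖A‖ = 1 := hn
  obtain ⟨y, hymem, hymax⟩ :=
    (isCompact_closedBall (0 : EuclideanSpace ℂ (Fin d)) 1).exists_isMaxOn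
      ⟨0, Metric.mem_closedBall_self zero_le_one⟩
      (A.continuous.norm.continuousOn)
  have hy1 : ‖y‖ ≤ 1 := by simpa [mem_closedBall_zero_iff] using hymem
  have hub : ‖A‖ ≤ ‖A y‖ := by
    refine A.opNorm_le_bound (norm_nonneg _) fun x => ?_
    rcases eq_or_ne x 0 with rfl | hx
    · simp
    · have hxpos : (0 : ℝ) < ‖x‖ := norm_pos_iff.mpr hx
      have hmem : (‖x‖⁻¹ : ℝ) • x ∈ Metric.closedBall (0 : EuclideanSpace ℂ (Fin d)) 1 := by
        rw [mem_closedBall_zero_iff, norm_smul]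
        simp [abs_of_nonneg (inv_nonneg.mpr hxpos.le), inv_mul_cancel₀ hxpos.ne']
      have h1' : ‖A ((‖x‖⁻¹ : ℝ) • x)‖ ≤ ‖A y‖ := hymax hmem
      rw [A.map_smul_of_tower, norm_smul] at h1'
      simp only [norm_inv, norm_norm] at h1'
      have : ‖x‖⁻¹ * ‖A x‖ ≤ ‖A y‖ := h1'
      calc ‖A x‖ = ‖x‖ * (‖x‖⁻¹ * ‖A x‖) := by field_simp
        _ ≤ ‖x‖ * ‖A y‖ := by nlinarith [norm_nonneg (A x)]
        _ = ‖A y‖ * ‖x‖ := mul_comm _ _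
  have hAy : ‖A y‖ = 1 := by
    have h2 : ‖A y‖ ≤ 1 := by
      calc ‖A y‖ ≤ ‖A‖ * ‖y‖ := A.le_opNorm y
        _ ≤ 1 := by rw [hAn]; simpa using hy1
    have h3 : (1 : ℝ) ≤ ‖A y‖ := hAn ▸ hub
    linarith
  have hyn : ‖y‖ = 1 := by
    have : (1 : ℝ) ≤ ‖y‖ := by
      have := A.le_opNorm y
      rw [hAy, hAn, one_mul] at this
      exact this
    linarith
  refine ⟨WithLp.equiv 2 _ y, ?_, ?_⟩
  · have : ⟪y, y⟫_ℂ = (1 : ℂ) := by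
      rw [inner_self_eq_norm_sq_to_K, hyn]; norm_num
    rw [EuclideanSpace.inner_eq_star_dotProduct, dotProduct_comm] at this
    exact this
  · set e : Fin d → ℂ := WithLp.equiv 2 _ y with hedef
    have hee : star e ⬝ᵥ e = 1 := by
      have : ⟪y, y⟫_ℂ = (1 : ℂ) := by
        rw [inner_self_eq_norm_sq_to_K, hyn]; norm_num
      rwa [EuclideanSpace.inner_eq_star_dotProduct, dotProduct_comm] at this
    -- M² dot product equals 1
    have hMe : (A y).ofLp = M *ᵥ e := by
      exact Matrix.ofLp_toEuclideanCLM M y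
    have hq2 : star e ⬝ᵥ ((M * M) *ᵥ e) = 1 := by
      have h5 : ⟪A y, A y⟫_ℂ = (1 : ℂ) := by
        rw [inner_self_eq_norm_sq_to_K, hAy]; norm_num
      rw [EuclideanSpace.inner_eq_star_dotProduct, hMe, dotProduct_comm] at h5
      have h6 : star (M *ᵥ e) ⬝ᵥ (M *ᵥ e) = star e ⬝ᵥ ((M * M) *ᵥ e) := by
        rw [Matrix.star_mulVec, ← Matrix.dotProduct_mulVec, Matrix.mulVec_mulVec, hM.1.eq]
      rw [← h6]
      exact h5
    -- M - M*M is PSD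
    have hMM : (M - M * M).PosSemidef := by
      obtain ⟨S, hSH, hSS⟩ : ∃ S : Mat d, Sᴴ = S ∧ S * S = M :=
        ⟨CFC.sqrt M, (nonneg_iff_posSemidef.mp (CFC.sqrt_nonneg M)).1.eq,
          CFC.sqrt_mul_sqrt_self M hM.nonneg⟩
      have hkey : S * (1 - M) * Sᴴ = M - M * M := by
        rw [hSH, mul_sub, mul_one, sub_mul, hSS]
        congr 1
        rw [← hSS]
        noncomm_ring
      have := h1.mul_mul_conjTranspose_same S
      rwa [hkey] at this
    have hge : (1 : ℂ) ≤ star e ⬝ᵥ (M *ᵥ e) := by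
      have := hMM.dotProduct_mulVec_nonneg e
      rw [Matrix.sub_mulVec, dotProduct_sub, hq2] at this
      exact sub_nonneg.mp (by simpa using this)
    have hle : star e ⬝ᵥ (M *ᵥ e) ≤ 1 := by
      have := h1.dotProduct_mulVec_nonneg e
      rw [Matrix.sub_mulVec, dotProduct_sub, Matrix.one_mulVec, hee] at this
      exact sub_nonneg.mp (by simpa using this)
    exact le_antisymm hle hge

lemma sum_dot {k d : ℕ} (M : Fin k → Mat d) (v : Fin d → ℂ) :
    ∑ m, star v ⬝ᵥ (M m *ᵥ v) = star v ⬝ᵥ ((∑ m, M m) *ᵥ v) := by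
  simp only [dotProduct, Matrix.mulVec, Matrix.sum_apply, Finset.mul_sum, Finset.sum_mul]
  exact (sum_swap₃ fun j i m => star v j * (M m j i * v i)).symm

/-- every essentially classical-quantum channel is universally image
additive: for any channel `T₂` and unit vector `ψ`, there is a separable state with the
same image under `T ⊗ T₂` as `ψψ*`. -/
theorem stmt17 {d n : ℕ} (T : Mat d →ₗ[ℂ] Mat n) (hT : IsChannel T)
    (hcq : IsEssentiallyCQ T) :
    ∀ (d' n' : ℕ) (T₂ : Mat d' →ₗ[ℂ] Mat n'), IsChannel T₂ →
      ∀ ψ : Fin d × Fin d' → ℂ, star ψ ⬝ᵥ ψ = 1 →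
        ∃ ρ : Matrix (Fin d × Fin d') (Fin d × Fin d') ℂ,
          IsDensity ρ ∧ SeparableState ρ ∧
          tensorFun (T ·) (T₂ ·) (vecMulVec ψ (star ψ)) = tensorFun (T ·) (T₂ ·) ρ := by
  intro d' n' T₂ hT₂ ψ hψ
  classical
  obtain ⟨k, M, σ, ⟨hMpsd, hMsum⟩, hMnorm, hσ, hTdef⟩ := hcq
  have hne : Nonempty (Fin d × Fin d') := by
    by_contra h
    rw [not_nonempty_iff] at h
    haveI := h
    simp [dotProduct] at hψ
  obtain ⟨⟨i0, p0⟩⟩ := hne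
  have hd' : (0 : ℕ) < d' := p0.pos
  have hgap : ∀ m, (1 - M m).PosSemidef := by
    intro m
    have h' : 1 - M m = ∑ r ∈ Finset.univ.erase m, M r := by
      rw [Finset.sum_erase_eq_sub (Finset.mem_univ m), hMsum]
    rw [h']
    exact posSemidef_sum' _ _ fun i _ => hMpsd i
  choose e he1 heM using fun m => exists_unit_fix (M m) (hMpsd m) (hgap m) (hMnorm m)
  have heδ : ∀ (r mm : Fin k), star (e r) ⬝ᵥ (M mm *ᵥ e r) = if mm = r then 1 else 0 := by
    intro r mm
    by_cases h : mm = r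
    · subst h
      simp [heM mm]
    · simp only [h, if_false]
      have hs : ∑ mm', star (e r) ⬝ᵥ (M mm' *ᵥ e r) = 1 := by
        rw [sum_dot, hMsum, Matrix.one_mulVec, he1 r]
      have h0 : ∑ mm' ∈ Finset.univ.erase r, star (e r) ⬝ᵥ (M mm' *ᵥ e r) = 0 := by
        rw [Finset.sum_erase_eq_sub (Finset.mem_univ r), hs, heM r, sub_self]
      exact (Finset.sum_eq_zero_iff_of_nonneg fun x _ => (hMpsd x).dotProduct_mulVec_nonneg (e r)).mp h0 mm
        (Finset.mem_erase.mpr ⟨h, Finset.mem_univ mm⟩)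
  set Φ : Matrix (Fin d × Fin d') (Fin d × Fin d') ℂ := vecMulVec ψ (star ψ) with hΦ
  set G : Fin k → Matrix (Fin d × Fin d') (Fin d × Fin d') ℂ → Mat d' :=
    fun m ρ => Matrix.of fun p q => ∑ i, ∑ j, M m j i * ρ (i, p) (j, q) with hG
  have hTE : ∀ (i j : Fin d), T (Matrix.single i j 1) = ∑ m, M m j i • σ m := by
    intro i j
    rw [hTdef]
    refine Finset.sum_congr rfl fun m _ => ?_
    congr 1
    simp [Matrix.trace, Matrix.diag, Matrix.mul_apply, Matrix.single, Matrix.of_apply,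
      Finset.sum_ite_eq, mul_ite, ite_and]
  have key : ∀ ρ, tensorFun (T ·) (T₂ ·) ρ = ∑ m, σ m ⊗ₖ T₂ (G m ρ) := by
    intro ρ
    have hT2G : ∀ m, T₂ (G m ρ) =
        ∑ p, ∑ q, (∑ i, ∑ j, M m j i * ρ (i, p) (j, q)) • T₂ (Matrix.single p q 1) := by
      intro m
      conv_lhs => rw [Matrix.matrix_eq_sum_single (G m ρ)]
      rw [map_sum]
      refine Finset.sum_congr rfl fun p _ => ?_
      rw [map_sum]
      refine Finset.sum_congr rfl fun q _ => ?_
      rw [show Matrix.single p q (G m ρ p q) = (G m ρ p q) • Matrix.single p q 1 by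
        rw [Matrix.smul_single, smul_eq_mul, mul_one], T₂.map_smul]
      simp only [hG, Matrix.of_apply]
    ext ⟨a, b⟩ ⟨c, f⟩
    simp only [tensorFun, Matrix.sum_apply, Matrix.smul_apply, Matrix.kroneckerMap_apply,
      smul_eq_mul, hTE, hT2G]
    simp only [Finset.sum_mul, Finset.mul_sum]
    refine Eq.trans ?_ (Eq.trans (sum_swap₅ fun i j p q m =>
      ρ (i, p) (j, q) * (M m j i * σ m a c * (T₂ (Matrix.single p q 1)) b f)) ?_)
    · refine Finset.sum_congr rfl fun i _ => Finset.sum_congr rfl fun j _ =>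
        Finset.sum_congr rfl fun p _ => Finset.sum_congr rfl fun q _ =>
        Finset.sum_congr rfl fun m _ => by ring
    · refine Finset.sum_congr rfl fun m _ => Finset.sum_congr rfl fun p _ =>
        Finset.sum_congr rfl fun q _ => Finset.sum_congr rfl fun i _ =>
        Finset.sum_congr rfl fun j _ => by ring
  set Ψ : Matrix (Fin d) (Fin d') ℂ := Matrix.of fun i p => ψ (i, p) with hΨ
  set B : Fin k → Mat d' := fun m => (Ψᴴ * M m * Ψ)ᵀ with hB
  have hBpsd : ∀ m, (B m).PosSemidef := fun m =>
    ((hMpsd m).conjTranspose_mul_mul_same Ψ).transpose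
  have hGΦ : ∀ m, G m Φ = B m := by
    intro m
    ext p q
    simp only [hG, hΦ, hB, hΨ, Matrix.of_apply, Matrix.transpose_apply, Matrix.mul_apply,
      Matrix.conjTranspose_apply, Matrix.vecMulVec_apply, Pi.star_apply, Finset.sum_mul,
      Finset.mul_sum]
    refine Finset.sum_congr rfl fun i _ => Finset.sum_congr rfl fun j _ => by ring
  have htr : ∑ m, (B m).trace = 1 := by
    have hsB : ∑ m, B m = (Ψᴴ * Ψ)ᵀ := by
      simp only [hB]
      rw [← Matrix.transpose_sum]
      have h6 : (∑ i, Ψᴴ * M i * Ψ) = Ψᴴ * Ψ := by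
        rw [← Matrix.sum_mul, ← Matrix.mul_sum, hMsum, Matrix.mul_one]
      rw [h6]
    rw [← Matrix.trace_sum, hsB, Matrix.trace_transpose, ← hψ]
    simp only [Matrix.trace, Matrix.diag_apply, Matrix.mul_apply, Matrix.conjTranspose_apply,
      hΨ, Matrix.of_apply, dotProduct, Pi.star_apply, Fintype.sum_prod_type]
    rw [Finset.sum_comm]
  set t : Fin k → ℂ := fun m => (B m).trace with ht
  have ht0 : ∀ m, 0 ≤ t m := by
    intro m
    refine Finset.sum_nonneg fun p _ => ?_
    have h2 := (hBpsd m).dotProduct_mulVec_nonneg (Pi.single p 1)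
    simpa [dotProduct, Matrix.mulVec, Pi.single_apply, Finset.sum_ite_eq, mul_ite]
      using h2
  set c : Fin k → ℝ := fun m => (t m).re with hc
  have hct : ∀ m, (c m : ℂ) = t m := by
    intro m
    have h2 := Complex.le_def.mp (ht0 m)
    apply Complex.ext
    · simp [hc]
    · simp [hc, ← h2.2]
  have hc0 : ∀ m, 0 ≤ c m := fun m => by
    simpa [hc] using (Complex.le_def.mp (ht0 m)).1
  set D : Mat d' := (((d' : ℝ)⁻¹ : ℝ) : ℂ) • 1 with hD
  have hDden : IsDensity D := by
    constructor
    · exact posSemidef_real_smul Matrix.PosSemidef.one (by positivity)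
    · rw [hD, Matrix.trace_smul, Matrix.trace_one]
      have : (d' : ℝ) ≠ 0 := by exact_mod_cast hd'.ne'
      simp only [smul_eq_mul, Fintype.card_fin]
      push_cast
      field_simp
  set Bt : Fin k → Mat d' := fun m => if t m = 0 then D else (t m)⁻¹ • B m with hBt
  have hBtden : ∀ m, IsDensity (Bt m) := by
    intro m
    simp only [hBt]
    by_cases h : t m = 0
    · simpa [h] using hDden
    · simp only [h, if_false]
      constructor
      · have h3 : (t m)⁻¹ • B m = (((c m)⁻¹ : ℝ) : ℂ) • B m := by
          rw [Complex.ofReal_inv, hct]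
        rw [h3]
        exact posSemidef_real_smul (hBpsd m) (inv_nonneg.mpr (hc0 m))
      · rw [Matrix.trace_smul, smul_eq_mul]
        exact inv_mul_cancel₀ h
  set A' : Fin k → Mat d := fun m => vecMulVec (e m) (star (e m)) with hA'
  have hA'den : ∀ m, IsDensity (A' m) := by
    intro m
    simp only [hA']
    constructor
    · rw [Matrix.vecMulVec_eq (Fin 1), ← Matrix.conjTranspose_replicateCol]
      exact Matrix.posSemidef_self_mul_conjTranspose _
    · rw [← he1 m]
      simp [Matrix.trace, Matrix.diag_apply, Matrix.vecMulVec_apply, dotProduct,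
        mul_comm]
  set ρs : Matrix (Fin d × Fin d') (Fin d × Fin d') ℂ :=
    ∑ m, (c m : ℂ) • (A' m ⊗ₖ Bt m) with hρs
  have hcsum : ∑ m, (c m : ℂ) = 1 := by
    calc ∑ m, (c m : ℂ) = ∑ m, t m := Finset.sum_congr rfl fun m _ => hct m
      _ = 1 := htr
  have hBm : ∀ m, (c m : ℂ) • Bt m = B m := by
    intro m
    simp only [hBt]
    by_cases h : t m = 0
    · have hcm : (c m : ℂ) = 0 := by rw [hct, h]
      rw [hcm, zero_smul]
      exact (psd_trace_eq_zero (hBpsd m) h).symm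
    · simp only [h, if_false]
      rw [smul_smul, hct, mul_inv_cancel₀ h, one_smul]
  refine ⟨ρs, ⟨?_, ?_⟩, ?_, ?_⟩
  · exact posSemidef_sum' _ _ fun m _ =>
      posSemidef_real_smul (posSemidef_kronecker ((hA'den m).1) ((hBtden m).1)) (hc0 m)
  · rw [hρs, Matrix.trace_sum]
    have h4 : ∀ m, ((c m : ℂ) • (A' m ⊗ₖ Bt m)).trace = (c m : ℂ) := by
      intro m
      rw [Matrix.trace_smul, Matrix.trace_kronecker, (hA'den m).2, (hBtden m).2, mul_one,
        smul_eq_mul, mul_one]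
    rw [Finset.sum_congr rfl fun m _ => h4 m, hcsum]
  · refine ⟨k, c, A', Bt, hc0, ?_, hA'den, hBtden, hρs⟩
    have h5 : ((∑ m, c m : ℝ) : ℂ) = 1 := by push_cast; exact hcsum
    exact_mod_cast h5
  · rw [key, key]
    refine Finset.sum_congr rfl fun m _ => ?_
    congr 1
    have hGρs : G m ρs = B m := by
      ext p q
      show (∑ i, ∑ j, M m j i * ρs (i, p) (j, q)) = B m p q
      calc ∑ i, ∑ j, M m j i * ρs (i, p) (j, q)
          = ∑ i, ∑ j, ∑ r, (c r : ℂ) * Bt r p q * (M m j i * (e r i * star (e r j))) := by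
            refine Finset.sum_congr rfl fun i _ => Finset.sum_congr rfl fun j _ => ?_
            rw [hρs]
            simp only [Matrix.sum_apply, Matrix.smul_apply, Matrix.kroneckerMap_apply, hA',
              Matrix.vecMulVec_apply, Pi.star_apply, smul_eq_mul, Finset.mul_sum]
            exact Finset.sum_congr rfl fun r _ => by ring
        _ = ∑ r, ∑ i, ∑ j, (c r : ℂ) * Bt r p q * (M m j i * (e r i * star (e r j))) :=
            sum_swap₃ _
        _ = ∑ r, (c r : ℂ) * Bt r p q * (star (e r) ⬝ᵥ (M m *ᵥ e r)) := by
            refine Finset.sum_congr rfl fun r _ => ?_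
            simp only [dotProduct, Matrix.mulVec, Pi.star_apply, Finset.mul_sum]
            rw [Finset.sum_comm]
            refine Finset.sum_congr rfl fun i _ => Finset.sum_congr rfl fun j _ => by ring
        _ = ∑ r, (c r : ℂ) * Bt r p q * (if m = r then 1 else 0) :=
            Finset.sum_congr rfl fun r _ => by rw [heδ r m]
        _ = (c m : ℂ) * Bt m p q := by
            simp [mul_ite, Finset.sum_ite_eq]
        _ = B m p q := by rw [← hBm m, Matrix.smul_apply, smul_eq_mul]
    rw [hGρs, hGΦ m]
end
end
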